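/- arXiv:2410.16401 — 5 statements merged into one kernel-verified Lean document; each statement's English description precedes it below -/
import Mathlib

section
/- Assume the coherence assumption with constant μ > 0. Let θ ∈ ℝ^{md}, α' = (α'_1, …, α'_n) ∈ ℝ^n and δ ≥ 0 satisfy ‖DG(θ) − 2 Σ_{i=1}^n α'_i Df_i(θ)‖ ≤ δ. Then for every i ∈ {1,…,n} and j ∈ {1,…,m}: |(φ''(θ_j · x_i) − α'_i) · φ'(θ_j · x_i)| ≤ δ / (2√μ). -/
open scoped RealInnerProductSpace
open Real Filter

noncomputable section

/-- The parameter space ℝ^{md}: m blocks θ_j ∈ ℝ^d, with the Euclidean norm. -/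
abbrev Param (m d : ℕ) : Type := PiLp 2 (fun _ : Fin m => EuclideanSpace ℝ (Fin d))

/-- Network output f_i(θ) = Σ_j φ(θ_j · x_i). -/
def netF {n m d : ℕ} (φ : ℝ → ℝ) (x : Fin n → EuclideanSpace ℝ (Fin d)) (i : Fin n)
    (θ : Param m d) : ℝ := ∑ j, φ ⟪θ j, x i⟫

/-- Euclidean gradient Df_i(θ), with j-th block φ'(θ_j · x_i) x_i. -/
def gradF {n m d : ℕ} (φ : ℝ → ℝ) (x : Fin n → EuclideanSpace ℝ (Fin d)) (i : Fin n)
    (θ : Param m d) : Param m d := WithLp.toLp 2 (fun j => (deriv φ ⟪θ j, x i⟫) • x i)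

/-- Implicit regularizer G(θ) = Σ_i Σ_j φ'(θ_j · x_i)². -/
def regG {n m d : ℕ} (φ : ℝ → ℝ) (x : Fin n → EuclideanSpace ℝ (Fin d))
    (θ : Param m d) : ℝ := ∑ i, ∑ j, (deriv φ ⟪θ j, x i⟫) ^ 2

/-- Euclidean gradient DG(θ), with j-th block Σ_i 2 φ'(θ_j·x_i) φ''(θ_j·x_i) x_i. -/
def gradRegG {n m d : ℕ} (φ : ℝ → ℝ) (x : Fin n → EuclideanSpace ℝ (Fin d))
    (θ : Param m d) : Param m d :=
  WithLp.toLp 2 (fun j => ∑ i, (2 * deriv φ ⟪θ j, x i⟫ * deriv (deriv φ) ⟪θ j, x i⟫) • x i)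

/-- Squared loss L(θ) = Σ_i (f_i(θ) − y_i)². -/
def lossL {n m d : ℕ} (φ : ℝ → ℝ) (x : Fin n → EuclideanSpace ℝ (Fin d)) (y : Fin n → ℝ)
    (θ : Param m d) : ℝ := ∑ i, (netF φ x i θ - y i) ^ 2

/-- Jacobian Df(θ) : ℝ^{md} → ℝ^n, whose i-th row is Df_i(θ). -/
def jacobian {n m d : ℕ} (φ : ℝ → ℝ) (x : Fin n → EuclideanSpace ℝ (Fin d))
    (θ : Param m d) : Param m d →ₗ[ℝ] (Fin n → ℝ) :=
  LinearMap.pi fun i => (innerSL ℝ (gradF φ x i θ)).toLinearMap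

/-- Riemannian gradient ∇G(θ): orthogonal projection of DG(θ) onto ker Df(θ). -/
def rgradG {n m d : ℕ} (φ : ℝ → ℝ) (x : Fin n → EuclideanSpace ℝ (Fin d))
    (θ : Param m d) : Param m d :=
  (Submodule.orthogonalProjectionOnto (LinearMap.ker (jacobian φ x θ)) (gradRegG φ x θ) : Param m d)
/-- approximate stationarity ‖DG(θ) − 2 Σ_i α'_i Df_i(θ)‖ ≤ δ implies
|(φ''(θ_j·x_i) − α'_i)·φ'(θ_j·x_i)| ≤ δ/(2√μ) for all i, j. -/
theorem stmt_5
    (n m d : ℕ) (hn : 1 ≤ n) (hm : 1 ≤ m) (hd : 1 ≤ d)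
    (x : Fin n → EuclideanSpace ℝ (Fin d)) (hx : ∀ i, ‖x i‖ = 1)
    (μ : ℝ) (hμ : 0 < μ)
    (hcoh : ∀ c : Fin n → ℝ, μ * ∑ i, (c i) ^ 2 ≤ ‖∑ i, c i • x i‖ ^ 2)
    (φ : ℝ → ℝ) (hφ : ContDiff ℝ (⊤ : ℕ∞) φ)
    (θ : Param m d) (α : Fin n → ℝ) (δ : ℝ) (hδ : 0 ≤ δ)
    (happrox : ‖gradRegG φ x θ - (2 : ℝ) • ∑ i, α i • gradF φ x i θ‖ ≤ δ) :
    ∀ i j, |(deriv (deriv φ) ⟪θ j, x i⟫ - α i) * deriv φ ⟪θ j, x i⟫|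
      ≤ δ / (2 * Real.sqrt μ) := by
  intro i j
  set v : Param m d := gradRegG φ x θ - (2 : ℝ) • ∑ i, α i • gradF φ x i θ with hv
  set c : Fin n → ℝ := fun i => 2 * deriv φ ⟪θ j, x i⟫ *
      (deriv (deriv φ) ⟪θ j, x i⟫ - α i) with hc
  have hvj : v j = ∑ i, c i • x i := by
    have e1 : v j = gradRegG φ x θ j - (2 : ℝ) • (∑ i, α i • gradF φ x i θ) j := rfl
    have e2 : (∑ i, α i • gradF φ x i θ) j = ∑ i, α i • gradF φ x i θ j := by
      rw [WithLp.ofLp_sum, Finset.sum_apply]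
      rfl
    rw [e1, e2]
    simp only [gradRegG, gradF, WithLp.ofLp_toLp, Finset.smul_sum, ← Finset.sum_sub_distrib]
    refine Finset.sum_congr rfl fun i _ => ?_
    simp only [hc, smul_smul, ← sub_smul]
    congr 1
    ring
  have hv2 : ‖v‖ ^ 2 = ∑ k, ‖v k‖ ^ 2 := PiLp.norm_sq_eq_of_L2 _ v
  have hblock : ‖v j‖ ^ 2 ≤ δ ^ 2 := by
    have h1 : ‖v j‖ ^ 2 ≤ ‖v‖ ^ 2 := by
      rw [hv2]
      exact Finset.single_le_sum (fun k _ => sq_nonneg ‖v k‖) (Finset.mem_univ j)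
    exact h1.trans (pow_le_pow_left₀ (norm_nonneg _) happrox 2)
  have hci : μ * (c i) ^ 2 ≤ δ ^ 2 := by
    calc μ * (c i) ^ 2 ≤ μ * ∑ k, (c k) ^ 2 := by
          apply mul_le_mul_of_nonneg_left _ hμ.le
          exact Finset.single_le_sum (fun k _ => sq_nonneg (c k)) (Finset.mem_univ i)
      _ ≤ ‖∑ k, c k • x k‖ ^ 2 := hcoh c
      _ = ‖v j‖ ^ 2 := by rw [hvj]
      _ ≤ δ ^ 2 := hblock
  have hsqrtμ : 0 < Real.sqrt μ := Real.sqrt_pos.mpr hμ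
  have habs : Real.sqrt μ * |c i| ≤ δ := by
    have := Real.sqrt_le_sqrt hci
    rwa [Real.sqrt_mul hμ.le, Real.sqrt_sq_eq_abs, Real.sqrt_sq hδ] at this
  have hkey : |c i| = 2 * |(deriv (deriv φ) ⟪θ j, x i⟫ - α i) * deriv φ ⟪θ j, x i⟫| := by
    simp only [hc]
    rw [show (2 : ℝ) * deriv φ ⟪θ j, x i⟫ * (deriv (deriv φ) ⟪θ j, x i⟫ - α i)
        = 2 * ((deriv (deriv φ) ⟪θ j, x i⟫ - α i) * deriv φ ⟪θ j, x i⟫) by ring]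
    rw [abs_mul, abs_two]
  rw [le_div_iff₀ (by positivity)]
  nlinarith [abs_nonneg ((deriv (deriv φ) ⟪θ j, x i⟫ - α i) * deriv φ ⟪θ j, x i⟫)]
end
end

section
/- Let φ be infinitely differentiable with φ'(z) ≥ ρ1 and φ'''(z) ≥ ρ2 for all z ∈ ℝ, where ρ1, ρ2 > 0, and assume the coherence assumption with constant μ > 0. Let θ satisfy f_i(θ) = y_i for all i, and suppose there exist α' ∈ ℝ^n and δ ≥ 0 with ‖DG(θ) − 2 Σ_{i=1}^n α'_i Df_i(θ)‖ ≤ δ. For each i let ν_i be the unique real number with φ(ν_i) = y_i / m. Then for every i ∈ {1,…,n} and j ∈ {1,…,m}: |θ_j · x_i − ν_i| ≤ δ / (√μ · ρ1 · ρ2). -/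
open scoped RealInnerProductSpace
open Real Filter

noncomputable section

/-- If `deriv f ≥ ρ` everywhere then `f b - f a ≥ ρ (b - a)` for `a ≤ b`. -/
lemma aux_lower_slope {f : ℝ → ℝ} (hf : Differentiable ℝ f) {ρ : ℝ}
    (h : ∀ z, ρ ≤ deriv f z) {a b : ℝ} (hab : a ≤ b) : ρ * (b - a) ≤ f b - f a := by
  rcases eq_or_lt_of_le hab with rfl | hab
  · simp
  · obtain ⟨c, _, hc⟩ := exists_deriv_eq_slope f hab hf.continuous.continuousOn
      hf.differentiableOn
    have hρc := h c
    rw [hc] at hρc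
    have hba : 0 < b - a := by linarith
    have : ρ * (b - a) ≤ (f b - f a) / (b - a) * (b - a) := by
      exact mul_le_mul_of_nonneg_right hρc (le_of_lt hba)
    calc ρ * (b - a) ≤ (f b - f a) / (b - a) * (b - a) := this
      _ = f b - f a := by field_simp

/-- In `PiLp 2`, each block norm is at most the total norm. -/
lemma aux_block_le {m d : ℕ} (w : Param m d) (j : Fin m) : ‖w j‖ ≤ ‖w‖ := by
  have h0 : ‖w‖ = Real.sqrt (∑ k, ‖w k‖ ^ 2) := PiLp.norm_eq_of_L2 w
  rw [h0]
  have h1 : ‖w j‖ ^ 2 ≤ ∑ k, ‖w k‖ ^ 2 :=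
    Finset.single_le_sum (f := fun k => ‖w k‖ ^ 2) (fun k _ => sq_nonneg _) (Finset.mem_univ j)
  calc ‖w j‖ = Real.sqrt (‖w j‖ ^ 2) := (Real.sqrt_sq (norm_nonneg _)).symm
    _ ≤ Real.sqrt (∑ k, ‖w k‖ ^ 2) := Real.sqrt_le_sqrt h1

/-- small (approximate-stationarity) gradient implies every pre-activation
θ_j·x_i is within δ/(√μ·ρ1·ρ2) of ν_i = φ⁻¹(y_i/m). -/
theorem stmt_8
    (n m d : ℕ) (hn : 1 ≤ n) (hm : 1 ≤ m) (hd : 1 ≤ d)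
    (x : Fin n → EuclideanSpace ℝ (Fin d)) (hx : ∀ i, ‖x i‖ = 1)
    (μ : ℝ) (hμ : 0 < μ)
    (hcoh : ∀ c : Fin n → ℝ, μ * ∑ i, (c i) ^ 2 ≤ ‖∑ i, c i • x i‖ ^ 2)
    (y : Fin n → ℝ)
    (φ : ℝ → ℝ) (hφ : ContDiff ℝ (⊤ : ℕ∞) φ)
    (ρ1 ρ2 : ℝ) (hρ1 : 0 < ρ1) (hρ2 : 0 < ρ2)
    (hφ' : ∀ z, ρ1 ≤ deriv φ z)
    (hφ''' : ∀ z, ρ2 ≤ deriv (deriv (deriv φ)) z)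
    (θ : Param m d)
    (hfit : ∀ i, netF φ x i θ = y i)
    (α : Fin n → ℝ) (δ : ℝ) (hδ : 0 ≤ δ)
    (happrox : ‖gradRegG φ x θ - (2 : ℝ) • ∑ i, α i • gradF φ x i θ‖ ≤ δ)
    (ν : Fin n → ℝ) (hν : ∀ i, φ (ν i) = y i / (m : ℝ)) :
    ∀ i j, |⟪θ j, x i⟫ - ν i| ≤ δ / (Real.sqrt μ * ρ1 * ρ2) := by
  have hφd : Differentiable ℝ φ := hφ.differentiable (by simp)
  have hφ1 : ContDiff ℝ (⊤ : ℕ∞) (deriv φ) := (contDiff_infty_iff_deriv.mp hφ).2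
  have hφ2 : ContDiff ℝ (⊤ : ℕ∞) (deriv (deriv φ)) := (contDiff_infty_iff_deriv.mp hφ1).2
  have hφ2d : Differentiable ℝ (deriv (deriv φ)) := hφ2.differentiable (by simp)
  set ψ : ℝ → ℝ := deriv (deriv φ) with hψdef
  have hsμ : 0 < Real.sqrt μ := Real.sqrt_pos.mpr hμ
  -- monotonicity of φ and of ψ
  have hmono : ∀ a b : ℝ, a ≤ b → ρ1 * (b - a) ≤ φ b - φ a :=
    fun a b hab => aux_lower_slope hφd hφ' hab
  have hψmono : ∀ a b : ℝ, a ≤ b → ρ2 * (b - a) ≤ ψ b - ψ a :=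
    fun a b hab => aux_lower_slope hφ2d hφ''' hab
  -- abbreviation
  set z : Fin n → Fin m → ℝ := fun i j => ⟪θ j, x i⟫ with hzdef
  -- Step 1: key coefficient bound per block
  have key : ∀ (j : Fin m) (i : Fin n),
      Real.sqrt μ * (2 * ρ1) * |ψ (z i j) - α i| ≤ δ := by
    intro j i
    set v : Param m d := gradRegG φ x θ - (2 : ℝ) • ∑ i, α i • gradF φ x i θ with hvdef
    set c : Fin n → ℝ := fun i =>
      2 * deriv φ (z i j) * ψ (z i j) - 2 * α i * deriv φ (z i j) with hcdef
    have hvj : v j = ∑ i, c i • x i := by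
      have h1 : v j = gradRegG φ x θ j -
          (2 : ℝ) • ((∑ i, α i • gradF φ x i θ) j) := rfl
      have h2 : (∑ i, α i • gradF φ x i θ) j = ∑ i, α i • (gradF φ x i θ j) := by
        rw [WithLp.ofLp_sum, Finset.sum_apply]; rfl
      rw [h1, h2]
      simp only [gradRegG, gradF, WithLp.ofLp_toLp, Finset.smul_sum, smul_smul]
      rw [← Finset.sum_sub_distrib]
      refine Finset.sum_congr rfl fun i _ => ?_
      rw [← sub_smul]
      congr 1
      simp only [hcdef]
      ring
    have hnv : ‖v j‖ ≤ δ := le_trans (aux_block_le v j) happrox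
    have hcoh' : μ * ∑ i, (c i) ^ 2 ≤ δ ^ 2 := by
      refine le_trans (hcoh c) ?_
      rw [← hvj]
      have := pow_le_pow_left₀ (norm_nonneg (v j)) hnv 2
      exact this
    have hci : μ * (c i) ^ 2 ≤ δ ^ 2 := by
      have h1 : (c i) ^ 2 ≤ ∑ k, (c k) ^ 2 :=
        Finset.single_le_sum (f := fun k => (c k) ^ 2) (fun k _ => sq_nonneg _)
          (Finset.mem_univ i)
      nlinarith
    have habs : Real.sqrt μ * |c i| ≤ δ := by
      have hμs : Real.sqrt μ ^ 2 = μ := Real.sq_sqrt hμ.le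
      nlinarith [sq_abs (c i), abs_nonneg (c i), mul_nonneg hsμ.le (abs_nonneg (c i))]
    -- c i = 2 * deriv φ (z i j) * (ψ (z i j) - α i)
    have hfactor : c i = 2 * deriv φ (z i j) * (ψ (z i j) - α i) := by
      rw [hcdef]; ring
    have hd1 : ρ1 ≤ deriv φ (z i j) := hφ' _
    have h2ρ : 2 * ρ1 * |ψ (z i j) - α i| ≤ |c i| := by
      rw [hfactor, abs_mul, abs_of_pos (by linarith : (0:ℝ) < 2 * deriv φ (z i j))]
      exact mul_le_mul_of_nonneg_right (by linarith) (abs_nonneg _)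
    calc Real.sqrt μ * (2 * ρ1) * |ψ (z i j) - α i|
        = Real.sqrt μ * (2 * ρ1 * |ψ (z i j) - α i|) := by ring
      _ ≤ Real.sqrt μ * |c i| := mul_le_mul_of_nonneg_left h2ρ hsμ.le
      _ ≤ δ := habs
  -- Step 2: pairwise bound on preactivations
  have hpair : ∀ (i : Fin n) (j k : Fin m),
      |z i j - z i k| ≤ δ / (Real.sqrt μ * ρ1 * ρ2) := by
    intro i j k
    have hψd : Real.sqrt μ * ρ1 * |ψ (z i j) - ψ (z i k)| ≤ δ := by
      have h1 := key j i
      have h2 := key k i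
      have htri : |ψ (z i j) - ψ (z i k)| ≤ |ψ (z i j) - α i| + |ψ (z i k) - α i| := by
        have := abs_sub_abs_le_abs_sub (ψ (z i j) - α i) (ψ (z i k) - α i)
        calc |ψ (z i j) - ψ (z i k)| = |(ψ (z i j) - α i) - (ψ (z i k) - α i)| := by
              ring_nf
          _ ≤ |ψ (z i j) - α i| + |ψ (z i k) - α i| := abs_sub _ _
      nlinarith [abs_nonneg (ψ (z i j) - α i), abs_nonneg (ψ (z i k) - α i),
        mul_nonneg hsμ.le hρ1.le]
    have hzψ : ρ2 * |z i j - z i k| ≤ |ψ (z i j) - ψ (z i k)| := by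
      rcases le_total (z i k) (z i j) with h | h
      · have := hψmono _ _ h
        rw [abs_of_nonneg (by linarith : (0:ℝ) ≤ z i j - z i k)]
        calc ρ2 * (z i j - z i k) ≤ ψ (z i j) - ψ (z i k) := this
          _ ≤ |ψ (z i j) - ψ (z i k)| := le_abs_self _
      · have := hψmono _ _ h
        rw [abs_of_nonpos (by linarith : z i j - z i k ≤ 0)]
        calc ρ2 * -(z i j - z i k) = ρ2 * (z i k - z i j) := by ring
          _ ≤ ψ (z i k) - ψ (z i j) := this
          _ = -(ψ (z i j) - ψ (z i k)) := by ring
          _ ≤ |ψ (z i j) - ψ (z i k)| := neg_le_abs _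
    have hpos : 0 < Real.sqrt μ * ρ1 * ρ2 := by positivity
    rw [le_div_iff₀ hpos]
    calc |z i j - z i k| * (Real.sqrt μ * ρ1 * ρ2)
        = Real.sqrt μ * ρ1 * (ρ2 * |z i j - z i k|) := by ring
      _ ≤ Real.sqrt μ * ρ1 * |ψ (z i j) - ψ (z i k)| := by
          exact mul_le_mul_of_nonneg_left hzψ (by positivity)
      _ ≤ δ := hψd
  -- Step 3: ν i lies between min and max
  intro i j
  haveI : Nonempty (Fin m) := ⟨⟨0, hm⟩⟩
  have hmpos : (0:ℝ) < (m:ℝ) := by exact_mod_cast hm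
  have hsum : ∑ k, φ (z i k) = ∑ k : Fin m, φ (ν i) := by
    have h1 : ∑ k, φ (z i k) = y i := hfit i
    have h2 : (∑ k : Fin m, φ (ν i)) = (m : ℝ) * φ (ν i) := by
      simp [Finset.sum_const, mul_comm]
    rw [h1, h2, hν i]
    field_simp
  obtain ⟨j0, _, hj0⟩ := Finset.exists_le_of_sum_le (Finset.univ_nonempty)
    (le_of_eq hsum.symm)
  obtain ⟨j1, _, hj1⟩ := Finset.exists_le_of_sum_le (Finset.univ_nonempty)
    (le_of_eq hsum)
  -- φ (ν i) ≤ φ (z i j0), φ (z i j1) ≤ φ (ν i)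
  have hν0 : ν i ≤ z i j0 := by
    by_contra h
    push_neg at h
    have := hmono _ _ h.le
    nlinarith
  have hν1 : z i j1 ≤ ν i := by
    by_contra h
    push_neg at h
    have := hmono _ _ h.le
    nlinarith
  rw [abs_sub_le_iff]
  constructor
  · calc z i j - ν i ≤ z i j - z i j1 := by linarith
      _ ≤ |z i j - z i j1| := le_abs_self _
      _ ≤ δ / (Real.sqrt μ * ρ1 * ρ2) := hpair i j j1
  · calc ν i - z i j ≤ z i j0 - z i j := by linarith
      _ ≤ |z i j0 - z i j| := le_abs_self _
      _ ≤ δ / (Real.sqrt μ * ρ1 * ρ2) := hpair i j0 j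
end
end

section
/- Let φ be infinitely differentiable with φ'(z) ≥ ρ1 and φ'''(z) ≥ ρ2 for all z ∈ ℝ, where ρ1, ρ2 > 0, satisfying β-normality with constant β > 0, and assume the coherence assumption with constant μ > 0. Let θ : [0, ∞) → ℝ^{md} be a Riemannian gradient-flow trajectory of G on the zero-loss set, and suppose at some time t0 ≥ 0 that ‖∇G(θ(t0))‖ ≤ √μ · β. Then for all t ≥ t0: ‖∇G(θ(t))‖² ≤ ‖∇G(θ(t0))‖² · e^{−(t − t0) ρ1 ρ2 μ}. -/
open scoped RealInnerProductSpace
open Real Filter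

noncomputable section

namespace Stmt14

open Matrix

variable {n m d : ℕ} (φ : ℝ → ℝ) (x : Fin n → EuclideanSpace ℝ (Fin d))

lemma param_sum_apply {ι : Type*} (s : Finset ι) (g : ι → Param m d) (j : Fin m) :
    (∑ i ∈ s, g i) j = ∑ i ∈ s, g i j := by rw [WithLp.ofLp_sum, Finset.sum_apply]

def gramM (θ : Param m d) : Matrix (Fin n) (Fin n) ℝ :=
  Matrix.of fun i k => ⟪gradF φ x i θ, gradF φ x k θ⟫

def bVec (θ : Param m d) : Fin n → ℝ := fun i => ⟪gradF φ x i θ, gradRegG φ x θ⟫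

def lamV (θ : Param m d) : Fin n → ℝ := (gramM φ x θ)⁻¹ *ᵥ bVec φ x θ

def vh (θ : Param m d) : Param m d := gradRegG φ x θ - ∑ i, lamV φ x θ i • gradF φ x i θ

lemma inner_gradF (i : Fin n) (θ w : Param m d) :
    ⟪gradF φ x i θ, w⟫ = ∑ j, deriv φ ⟪θ j, x i⟫ * ⟪x i, w j⟫ := by
  rw [PiLp.inner_apply]
  exact Finset.sum_congr rfl fun j _ => real_inner_smul_left _ _ _

lemma inner_gradRegG (θ w : Param m d) :
    ⟪gradRegG φ x θ, w⟫
      = ∑ j, ∑ i, 2 * deriv φ ⟪θ j, x i⟫ * deriv (deriv φ) ⟪θ j, x i⟫ * ⟪x i, w j⟫ := by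
  rw [PiLp.inner_apply]
  refine Finset.sum_congr rfl fun j _ => ?_
  rw [show (gradRegG φ x θ) j = ∑ i, (2 * deriv φ ⟪θ j, x i⟫ * deriv (deriv φ) ⟪θ j, x i⟫) • x i
    from rfl, sum_inner]
  exact Finset.sum_congr rfl fun i _ => real_inner_smul_left _ _ _

variable {φ x}

lemma quad_lower {μ ρ1 : ℝ} (hμ : 0 < μ)
    (hcoh : ∀ c : Fin n → ℝ, μ * ∑ i, (c i) ^ 2 ≤ ‖∑ i, c i • x i‖ ^ 2)
    (hρ1 : 0 < ρ1) (hφ' : ∀ z, ρ1 ≤ deriv φ z) (hm : 1 ≤ m)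
    (θ : Param m d) (c : Fin n → ℝ) :
    μ * ρ1 ^ 2 * ∑ i, c i ^ 2 ≤ ‖∑ i, c i • gradF φ x i θ‖ ^ 2 := by
  have hsq : ‖∑ i, c i • gradF φ x i θ‖ ^ 2
      = ∑ j, ‖∑ i, (c i * deriv φ ⟪θ j, x i⟫) • x i‖ ^ 2 := by
    rw [PiLp.norm_sq_eq_of_L2]
    refine Finset.sum_congr rfl fun j _ => ?_
    have hj : (∑ i, c i • gradF φ x i θ) j = ∑ i, (c i * deriv φ ⟪θ j, x i⟫) • x i := by
      rw [param_sum_apply]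
      refine Finset.sum_congr rfl fun i _ => ?_
      rw [PiLp.smul_apply, show (gradF φ x i θ) j = (deriv φ ⟪θ j, x i⟫) • x i from rfl,
        smul_smul]
    rw [hj]
  set j0 : Fin m := ⟨0, hm⟩
  have h1 : μ * ∑ i, (c i * deriv φ ⟪θ j0, x i⟫) ^ 2
      ≤ ‖∑ i, (c i * deriv φ ⟪θ j0, x i⟫) • x i‖ ^ 2 := hcoh _
  have h2 : μ * (ρ1 ^ 2 * ∑ i, c i ^ 2) ≤ μ * ∑ i, (c i * deriv φ ⟪θ j0, x i⟫) ^ 2 := by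
    apply mul_le_mul_of_nonneg_left _ hμ.le
    rw [Finset.mul_sum]
    refine Finset.sum_le_sum fun i _ => ?_
    have h0 : ρ1 ^ 2 ≤ (deriv φ ⟪θ j0, x i⟫) ^ 2 :=
      pow_le_pow_left₀ hρ1.le (hφ' ⟪θ j0, x i⟫) 2
    rw [mul_pow]
    nlinarith [sq_nonneg (c i), sq_nonneg (deriv φ ⟪θ j0, x i⟫)]
  have h3 : ‖∑ i, (c i * deriv φ ⟪θ j0, x i⟫) • x i‖ ^ 2
      ≤ ∑ j, ‖∑ i, (c i * deriv φ ⟪θ j, x i⟫) • x i‖ ^ 2 :=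
    Finset.single_le_sum (f := fun j => ‖∑ i, (c i * deriv φ ⟪θ j, x i⟫) • x i‖ ^ 2)
      (fun j _ => by positivity) (Finset.mem_univ j0)
  rw [hsq]
  calc μ * ρ1 ^ 2 * ∑ i, c i ^ 2 = μ * (ρ1 ^ 2 * ∑ i, c i ^ 2) := by ring
  _ ≤ μ * ∑ i, (c i * deriv φ ⟪θ j0, x i⟫) ^ 2 := h2
  _ ≤ _ := h1.trans h3

lemma gram_det_ne_zero {μ ρ1 : ℝ} (hμ : 0 < μ)
    (hcoh : ∀ c : Fin n → ℝ, μ * ∑ i, (c i) ^ 2 ≤ ‖∑ i, c i • x i‖ ^ 2)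
    (hρ1 : 0 < ρ1) (hφ' : ∀ z, ρ1 ≤ deriv φ z) (hm : 1 ≤ m)
    (θ : Param m d) : (gramM φ x θ).det ≠ 0 := by
  intro hdet
  obtain ⟨c, hc0, hc⟩ := (Matrix.exists_mulVec_eq_zero_iff).2 hdet
  have key : ∀ i, (gramM φ x θ *ᵥ c) i = ⟪gradF φ x i θ, ∑ k, c k • gradF φ x k θ⟫ := by
    intro i
    rw [inner_sum (𝕜 := ℝ)]
    simp only [Matrix.mulVec, dotProduct, gramM, Matrix.of_apply]
    refine Finset.sum_congr rfl fun k _ => ?_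
    rw [real_inner_smul_right]
    ring
  have hquad : ‖∑ i, c i • gradF φ x i θ‖ ^ 2 = 0 := by
    rw [← real_inner_self_eq_norm_sq, sum_inner (𝕜 := ℝ)]
    calc ∑ i, ⟪c i • gradF φ x i θ, ∑ k, c k • gradF φ x k θ⟫
        = ∑ i, c i * (gramM φ x θ *ᵥ c) i := by
          refine Finset.sum_congr rfl fun i _ => ?_
          rw [key, real_inner_smul_left]
      _ = 0 := by rw [hc]; simp
  have := quad_lower hμ hcoh hρ1 hφ' hm θ c
  rw [hquad] at this
  have hcpos : 0 < ∑ i, c i ^ 2 := by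
    rcases Function.ne_iff.1 hc0 with ⟨i, hi⟩
    have h1 : 0 < c i ^ 2 := pow_two_pos_of_ne_zero hi
    have h2 : c i ^ 2 ≤ ∑ k, c k ^ 2 :=
      Finset.single_le_sum (f := fun k => c k ^ 2) (fun k _ => sq_nonneg _) (Finset.mem_univ i)
    linarith
  nlinarith [mul_pos (mul_pos hμ (pow_pos hρ1 2)) hcpos]

end Stmt14
namespace Stmt14
variable {n m d : ℕ} {φ : ℝ → ℝ} {x : Fin n → EuclideanSpace ℝ (Fin d)}
open Matrix

section DetNe
variable {μ ρ1 : ℝ} (hμ : 0 < μ)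
    (hcoh : ∀ c : Fin n → ℝ, μ * ∑ i, (c i) ^ 2 ≤ ‖∑ i, c i • x i‖ ^ 2)
    (hρ1 : 0 < ρ1) (hφ' : ∀ z, ρ1 ≤ deriv φ z) (hm : 1 ≤ m) (θ : Param m d)
include hμ hcoh hρ1 hφ' hm

lemma mulVec_lamV : gramM φ x θ *ᵥ lamV φ x θ = bVec φ x θ := by
  rw [lamV, Matrix.mulVec_mulVec, Matrix.mul_nonsing_inv _
    (isUnit_iff_ne_zero.2 (gram_det_ne_zero hμ hcoh hρ1 hφ' hm θ)), Matrix.one_mulVec]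

lemma inner_gradF_vh (i : Fin n) : ⟪gradF φ x i θ, vh φ x θ⟫ = 0 := by
  rw [vh, inner_sub_right, inner_sum (𝕜 := ℝ)]
  have h1 : ∑ k, ⟪gradF φ x i θ, lamV φ x θ k • gradF φ x k θ⟫
      = (gramM φ x θ *ᵥ lamV φ x θ) i := by
    simp only [Matrix.mulVec, dotProduct, gramM, Matrix.of_apply]
    refine Finset.sum_congr rfl fun k _ => ?_
    rw [real_inner_smul_right]; ring
  rw [h1, mulVec_lamV hμ hcoh hρ1 hφ' hm θ, bVec, sub_self]

set_option synthInstance.maxHeartbeats 1000000 in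
lemma rgradG_eq_vh : rgradG φ x θ = vh φ x θ := by
  rw [rgradG, ← Submodule.starProjection_apply]
  apply Submodule.eq_starProjection_of_mem_of_inner_eq_zero
  · rw [LinearMap.mem_ker]
    funext i
    show ⟪gradF φ x i θ, vh φ x θ⟫ = 0
    exact inner_gradF_vh hμ hcoh hρ1 hφ' hm θ i
  · intro w hw
    rw [LinearMap.mem_ker] at hw
    have hwi : ∀ i, ⟪gradF φ x i θ, w⟫ = 0 := fun i => congrFun hw i
    have : gradRegG φ x θ - vh φ x θ = ∑ i, lamV φ x θ i • gradF φ x i θ := by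
      rw [vh]; abel
    rw [this, sum_inner (𝕜 := ℝ)]
    refine Finset.sum_eq_zero fun i _ => ?_
    rw [real_inner_smul_left, hwi i, mul_zero]

end DetNe

/-- block representation of vh -/
lemma vh_apply (θ : Param m d) (j : Fin m) :
    vh φ x θ j = ∑ i, (2 * deriv φ ⟪θ j, x i⟫ * deriv (deriv φ) ⟪θ j, x i⟫
      - lamV φ x θ i * deriv φ ⟪θ j, x i⟫) • x i := by
  rw [vh, PiLp.sub_apply, param_sum_apply]
  rw [show (gradRegG φ x θ) j = ∑ i, (2 * deriv φ ⟪θ j, x i⟫ * deriv (deriv φ) ⟪θ j, x i⟫) • x i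
    from rfl, ← Finset.sum_sub_distrib]
  refine Finset.sum_congr rfl fun i _ => ?_
  rw [PiLp.smul_apply, show (gradF φ x i θ) j = (deriv φ ⟪θ j, x i⟫) • x i from rfl,
    smul_smul, sub_smul]

end Stmt14
namespace Stmt14
variable {n m d : ℕ} {φ : ℝ → ℝ} {x : Fin n → EuclideanSpace ℝ (Fin d)}
open Matrix

lemma differentiable_finset_prod {E : Type*} [NormedAddCommGroup E] [NormedSpace ℝ E]
    {ι : Type*} (s : Finset ι) (f : ι → E → ℝ) (hf : ∀ i, Differentiable ℝ (f i)) :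
    Differentiable ℝ (fun p => ∏ i ∈ s, f i p) := by
  classical
  induction s using Finset.induction with
  | empty => simpa using differentiable_const (1 : ℝ)
  | insert a s hnot ih =>
    simp only [Finset.prod_insert hnot]
    exact (hf _).mul ih

lemma differentiable_det {E : Type*} [NormedAddCommGroup E] [NormedSpace ℝ E]
    {N : E → Matrix (Fin n) (Fin n) ℝ} (h : ∀ i j, Differentiable ℝ fun p => N p i j) :
    Differentiable ℝ fun p => (N p).det := by
  have : (fun p => (N p).det)
      = fun p => ∑ σ : Equiv.Perm (Fin n), ((Equiv.Perm.sign σ : ℤ) : ℝ) * ∏ i, N p (σ i) i := by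
    funext p
    rw [Matrix.det_apply]
    exact Finset.sum_congr rfl fun σ _ => by rw [Units.smul_def, zsmul_eq_mul]
  rw [this]
  refine Differentiable.fun_sum fun σ _ => ?_
  exact (differentiable_finset_prod _ _ fun i => h (σ i) i).const_mul _

lemma differentiable_coord (j : Fin m) :
    Differentiable ℝ (fun θ : Param m d => θ j) :=
  (differentiable_piLp (𝕜 := ℝ) 2).1 differentiable_id j

lemma differentiable_z (i : Fin n) (j : Fin m) :
    Differentiable ℝ (fun θ : Param m d => ⟪θ j, x i⟫) :=
  Differentiable.inner ℝ (differentiable_coord j) (differentiable_const (x i))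

section Smooth
variable (hφ : ContDiff ℝ (⊤ : ℕ∞) φ)
include hφ

lemma contDiff_phi1 : ContDiff ℝ (⊤ : ℕ∞) (deriv φ) := by
  have := (contDiff_infty_iff_deriv.1 (by exact_mod_cast hφ)).2
  exact_mod_cast this

omit hφ in
lemma diff_of_top {f : ℝ → ℝ} (h : ContDiff ℝ (⊤ : ℕ∞) f) : Differentiable ℝ f :=
  h.differentiable (by simp)

lemma differentiable_gradF (i : Fin n) :
    Differentiable ℝ (fun θ : Param m d => gradF φ x i θ) := by
  refine (differentiable_piLp (𝕜 := ℝ) 2).2 fun j => ?_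
  exact ((diff_of_top (contDiff_phi1 hφ)).comp (differentiable_z i j)).smul_const (x i)

lemma differentiable_gradRegG :
    Differentiable ℝ (fun θ : Param m d => gradRegG φ x θ) := by
  have hφ2 := contDiff_phi1 (contDiff_phi1 hφ)
  refine (differentiable_piLp (𝕜 := ℝ) 2).2 fun j => ?_
  show Differentiable ℝ (fun θ : Param m d =>
    ∑ i, (2 * deriv φ ⟪θ j, x i⟫ * deriv (deriv φ) ⟪θ j, x i⟫) • x i)
  refine Differentiable.fun_sum fun i _ => ?_
  refine Differentiable.smul_const ?_ (x i)
  exact (differentiable_const 2 |>.mul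
    ((diff_of_top (contDiff_phi1 hφ)).comp (differentiable_z i j))).mul
    ((diff_of_top hφ2).comp (differentiable_z i j))

lemma differentiable_gram (i k : Fin n) :
    Differentiable ℝ (fun θ : Param m d => gramM φ x θ i k) :=
  Differentiable.inner ℝ (differentiable_gradF hφ i) (differentiable_gradF hφ k)

lemma differentiable_bVec (i : Fin n) :
    Differentiable ℝ (fun θ : Param m d => bVec φ x θ i) :=
  Differentiable.inner ℝ (differentiable_gradF hφ i) (differentiable_gradRegG hφ)

variable {μ ρ1 : ℝ} (hμ : 0 < μ)
    (hcoh : ∀ c : Fin n → ℝ, μ * ∑ i, (c i) ^ 2 ≤ ‖∑ i, c i • x i‖ ^ 2)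
    (hρ1 : 0 < ρ1) (hφ' : ∀ z, ρ1 ≤ deriv φ z) (hm : 1 ≤ m)
include hμ hcoh hρ1 hφ' hm

lemma differentiable_lamV (i : Fin n) :
    Differentiable ℝ (fun θ : Param m d => lamV φ x θ i) := by
  have hrepr : (fun θ : Param m d => lamV φ x θ i)
      = fun θ => ((gramM φ x θ).det)⁻¹ * ((gramM φ x θ).updateCol i (bVec φ x θ)).det := by
    funext θ
    rw [lamV, Matrix.inv_def, Matrix.smul_mulVec, Pi.smul_apply,
      ← Matrix.cramer_eq_adjugate_mulVec, Ring.inverse_eq_inv, Matrix.cramer_apply,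
      smul_eq_mul]
  rw [hrepr]
  refine Differentiable.mul (Differentiable.inv ?_ ?_) ?_
  · exact differentiable_det fun r s => differentiable_gram hφ r s
  · exact fun θ => gram_det_ne_zero hμ hcoh hρ1 hφ' hm θ
  · refine differentiable_det fun r s => ?_
    by_cases hs : s = i
    · subst hs
      simpa [Matrix.updateCol_apply] using differentiable_bVec hφ r
    · simpa [Matrix.updateCol_apply, hs] using differentiable_gram hφ r s

lemma differentiable_vh : Differentiable ℝ (fun θ : Param m d => vh φ x θ) := by
  refine (differentiable_gradRegG hφ).sub ?_
  refine Differentiable.fun_sum fun i _ => ?_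
  exact (differentiable_lamV hφ hμ hcoh hρ1 hφ' hm i).smul (differentiable_gradF hφ i)

end Smooth
end Stmt14
namespace Stmt14
variable {n m d : ℕ} {φ : ℝ → ℝ} {x : Fin n → EuclideanSpace ℝ (Fin d)}
open Matrix

section Flow
set_option maxHeartbeats 2000000
set_option synthInstance.maxHeartbeats 400000
variable (hφ : ContDiff ℝ (⊤ : ℕ∞) φ)
variable {μ ρ1 : ℝ} (hμ : 0 < μ)
    (hcoh : ∀ c : Fin n → ℝ, μ * ∑ i, (c i) ^ 2 ≤ ‖∑ i, c i • x i‖ ^ 2)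
    (hρ1 : 0 < ρ1) (hφ' : ∀ z, ρ1 ≤ deriv φ z) (hm : 1 ≤ m)
variable {θt : ℝ → Param m d}
    (hflow : ∀ t, 0 ≤ t → HasDerivAt θt (-(vh φ x (θt t))) t)
include hφ hμ hcoh hρ1 hφ' hm hflow

lemma hasDerivAt_normsq_vh (t : ℝ) (ht : 0 ≤ t) :
    HasDerivAt (fun s => ‖vh φ x (θt s)‖ ^ 2)
      (-2 * ∑ i, ∑ j,
        (2 * (deriv (deriv φ) ⟪θt t j, x i⟫) ^ 2
          + 2 * deriv φ ⟪θt t j, x i⟫ * deriv (deriv (deriv φ)) ⟪θt t j, x i⟫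
          - lamV φ x (θt t) i * deriv (deriv φ) ⟪θt t j, x i⟫)
        * ⟪x i, vh φ x (θt t) j⟫ ^ 2) t := by
  have hφ1 : ContDiff ℝ (⊤ : ℕ∞) (deriv φ) := contDiff_phi1 hφ
  have hφ2 : ContDiff ℝ (⊤ : ℕ∞) (deriv (deriv φ)) := contDiff_phi1 hφ1
  have hφ3 : ContDiff ℝ (⊤ : ℕ∞) (deriv (deriv (deriv φ))) := contDiff_phi1 hφ2
  set θ : Param m d := θt t with hθ
  set V : Param m d := vh φ x θ with hV0
  set Vd : Param m d := fderiv ℝ (fun p => vh φ x p) θ (-V) with hVd0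
  -- derivative of V along the curve
  haveI : ContinuousSMul ℝ (Param m d) := inferInstance
  have hV : HasDerivAt (fun s => vh φ x (θt s)) Vd t :=
    ((differentiable_vh hφ hμ hcoh hρ1 hφ' hm θ).hasFDerivAt).comp_hasDerivAt t (hflow t ht)
  have hVj : ∀ j, HasDerivAt (fun s => vh φ x (θt s) j) (Vd j) t := fun j => by
    have h := (PiLp.proj (𝕜 := ℝ) 2 (fun _ : Fin m => EuclideanSpace ℝ (Fin d)) j).hasFDerivAt.comp_hasDerivAt
      t hV
    exact h
  have hθj : ∀ j, HasDerivAt (fun s => θt s j) (-(V j)) t := fun j => by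
    have h := (PiLp.proj (𝕜 := ℝ) 2 (fun _ : Fin m => EuclideanSpace ℝ (Fin d)) j).hasFDerivAt.comp_hasDerivAt
      t (hflow t ht)
    have e : (PiLp.proj (𝕜 := ℝ) 2 (fun _ : Fin m => EuclideanSpace ℝ (Fin d)) j) (-V) = -(V j) := by
      rw [map_neg]; rfl
    rw [e] at h
    exact h
  -- scalar building blocks
  have hZ : ∀ i j, HasDerivAt (fun s => ⟪θt s j, x i⟫) (-⟪x i, V j⟫) t := fun i j => by
    have h := HasDerivAt.inner ℝ (hθj j) (hasDerivAt_const t (x i))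
    have e : (⟪θt t j, (0 : EuclideanSpace ℝ (Fin d))⟫ + ⟪-(V j), x i⟫ : ℝ) = -⟪x i, V j⟫ := by
      rw [inner_zero_right, inner_neg_left, real_inner_comm]
      ring
    rw [e] at h
    exact h
  have hP : ∀ i j, HasDerivAt (fun s => ⟪x i, vh φ x (θt s) j⟫) (⟪x i, Vd j⟫) t := fun i j => by
    have h := HasDerivAt.inner ℝ (hasDerivAt_const t (x i)) (hVj j)
    have e : (⟪x i, Vd j⟫ + ⟪(0 : EuclideanSpace ℝ (Fin d)), vh φ x (θt t) j⟫ : ℝ)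
        = ⟪x i, Vd j⟫ := by
      rw [inner_zero_left, add_zero]
    rw [e] at h
    exact h
  have hphi1Z : ∀ i j, HasDerivAt (fun s => deriv φ ⟪θt s j, x i⟫)
      (deriv (deriv φ) ⟪θ j, x i⟫ * -⟪x i, V j⟫) t := fun i j =>
    ((diff_of_top hφ1 _).hasDerivAt).comp t (hZ i j)
  have hphi2Z : ∀ i j, HasDerivAt (fun s => deriv (deriv φ) ⟪θt s j, x i⟫)
      (deriv (deriv (deriv φ)) ⟪θ j, x i⟫ * -⟪x i, V j⟫) t := fun i j =>
    ((diff_of_top hφ2 _).hasDerivAt).comp t (hZ i j)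
  -- constraint second-derivative identity
  have hstar : ∀ i, ∑ j, deriv φ ⟪θ j, x i⟫ * ⟪x i, Vd j⟫
      = ∑ j, deriv (deriv φ) ⟪θ j, x i⟫ * ⟪x i, V j⟫ ^ 2 := by
    intro i
    have hfun : (fun s => ∑ j, deriv φ ⟪θt s j, x i⟫ * ⟪x i, vh φ x (θt s) j⟫)
        = fun _ => (0 : ℝ) := by
      funext s
      rw [← inner_gradF φ x i (θt s) (vh φ x (θt s))]
      exact inner_gradF_vh hμ hcoh hρ1 hφ' hm (θt s) i
    have hder : HasDerivAt (fun s => ∑ j, deriv φ ⟪θt s j, x i⟫ * ⟪x i, vh φ x (θt s) j⟫)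
        (∑ j, (deriv (deriv φ) ⟪θ j, x i⟫ * -⟪x i, V j⟫ * ⟪x i, V j⟫
          + deriv φ ⟪θ j, x i⟫ * ⟪x i, Vd j⟫)) t :=
      HasDerivAt.fun_sum fun j _ => (hphi1Z i j).fun_mul (hP i j)
    have h0 : HasDerivAt (fun s => ∑ j, deriv φ ⟪θt s j, x i⟫ * ⟪x i, vh φ x (θt s) j⟫)
        (0 : ℝ) t := by
      rw [hfun]; exact hasDerivAt_const t 0
    have := hder.unique h0
    rw [Finset.sum_add_distrib] at this
    have h2 : ∑ j, deriv φ ⟪θ j, x i⟫ * ⟪x i, Vd j⟫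
        = -∑ j, deriv (deriv φ) ⟪θ j, x i⟫ * -⟪x i, V j⟫ * ⟪x i, V j⟫ := by linarith
    rw [h2, ← Finset.sum_neg_distrib]
    exact Finset.sum_congr rfl fun j _ => by ring
  -- the identity ‖vh‖² = ⟪DG, vh⟫ pointwise
  have hE1 : (fun s => ‖vh φ x (θt s)‖ ^ 2)
      = fun s => ∑ j, ∑ i, 2 * deriv φ ⟪θt s j, x i⟫ * deriv (deriv φ) ⟪θt s j, x i⟫
          * ⟪x i, vh φ x (θt s) j⟫ := by
    funext s
    have hdecomp : gradRegG φ x (θt s)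
        = vh φ x (θt s) + ∑ i, lamV φ x (θt s) i • gradF φ x i (θt s) := by
      rw [vh]; abel
    have h1 : ⟪gradRegG φ x (θt s), vh φ x (θt s)⟫ = ‖vh φ x (θt s)‖ ^ 2 := by
      rw [hdecomp, inner_add_left, sum_inner (𝕜 := ℝ), real_inner_self_eq_norm_sq]
      have hz : ∑ i, ⟪lamV φ x (θt s) i • gradF φ x i (θt s), vh φ x (θt s)⟫ = 0 := by
        refine Finset.sum_eq_zero fun i _ => ?_
        rw [real_inner_smul_left, inner_gradF_vh hμ hcoh hρ1 hφ' hm (θt s) i, mul_zero]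
      rw [hz, add_zero]
    rw [← h1, inner_gradRegG]
  -- derivative of the right-hand side of hE1
  have hA : HasDerivAt (fun s => ∑ j, ∑ i, 2 * deriv φ ⟪θt s j, x i⟫
        * deriv (deriv φ) ⟪θt s j, x i⟫ * ⟪x i, vh φ x (θt s) j⟫)
      (∑ j, ∑ i,
        (((0 * deriv φ ⟪θ j, x i⟫ + 2 * (deriv (deriv φ) ⟪θ j, x i⟫ * -⟪x i, V j⟫))
            * deriv (deriv φ) ⟪θ j, x i⟫
          + 2 * deriv φ ⟪θ j, x i⟫ * (deriv (deriv (deriv φ)) ⟪θ j, x i⟫ * -⟪x i, V j⟫))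
            * ⟪x i, V j⟫
          + 2 * deriv φ ⟪θ j, x i⟫ * deriv (deriv φ) ⟪θ j, x i⟫ * ⟪x i, Vd j⟫)) t :=
    HasDerivAt.fun_sum fun j _ => HasDerivAt.fun_sum fun i _ =>
      (((hasDerivAt_const t 2).fun_mul (hphi1Z i j)).fun_mul (hphi2Z i j)).fun_mul (hP i j)
  -- derivative of the norm squared via the inner product rule
  have hN : HasDerivAt (fun s => ‖vh φ x (θt s)‖ ^ 2) (⟪V, Vd⟫ + ⟪Vd, V⟫) t := by
    have h := HasDerivAt.inner ℝ hV hV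
    have e : (fun s => ⟪vh φ x (θt s), vh φ x (θt s)⟫) = fun s => ‖vh φ x (θt s)‖ ^ 2 :=
      funext fun s => real_inner_self_eq_norm_sq _
    rw [e] at h
    exact h
  have huniq : ⟪V, Vd⟫ + ⟪Vd, V⟫ = ∑ j, ∑ i,
        (((0 * deriv φ ⟪θ j, x i⟫ + 2 * (deriv (deriv φ) ⟪θ j, x i⟫ * -⟪x i, V j⟫))
            * deriv (deriv φ) ⟪θ j, x i⟫
          + 2 * deriv φ ⟪θ j, x i⟫ * (deriv (deriv (deriv φ)) ⟪θ j, x i⟫ * -⟪x i, V j⟫))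
            * ⟪x i, V j⟫
          + 2 * deriv φ ⟪θ j, x i⟫ * deriv (deriv φ) ⟪θ j, x i⟫ * ⟪x i, Vd j⟫) := by
    refine hN.unique ?_
    rw [hE1]
    exact hA
  -- abbreviations for the three scalar sums
  set S1 : ℝ := ∑ j, ∑ i, ((deriv (deriv φ) ⟪θ j, x i⟫) ^ 2
      + deriv φ ⟪θ j, x i⟫ * deriv (deriv (deriv φ)) ⟪θ j, x i⟫) * ⟪x i, V j⟫ ^ 2 with hS1
  set S2 : ℝ := ∑ i, lamV φ x θ i * ∑ j, deriv (deriv φ) ⟪θ j, x i⟫ * ⟪x i, V j⟫ ^ 2 with hS2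
  set Q0 : ℝ := ⟪V, Vd⟫ with hQ0
  have hsym : ⟪Vd, V⟫ = Q0 := real_inner_comm _ _
  -- split the big sum
  have hsplit : (∑ j, ∑ i,
        (((0 * deriv φ ⟪θ j, x i⟫ + 2 * (deriv (deriv φ) ⟪θ j, x i⟫ * -⟪x i, V j⟫))
            * deriv (deriv φ) ⟪θ j, x i⟫
          + 2 * deriv φ ⟪θ j, x i⟫ * (deriv (deriv (deriv φ)) ⟪θ j, x i⟫ * -⟪x i, V j⟫))
            * ⟪x i, V j⟫
          + 2 * deriv φ ⟪θ j, x i⟫ * deriv (deriv φ) ⟪θ j, x i⟫ * ⟪x i, Vd j⟫))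
      = -2 * S1 + ∑ j, ∑ i, 2 * deriv φ ⟪θ j, x i⟫ * deriv (deriv φ) ⟪θ j, x i⟫
          * ⟪x i, Vd j⟫ := by
    rw [hS1, Finset.mul_sum, ← Finset.sum_add_distrib]
    refine Finset.sum_congr rfl fun j _ => ?_
    rw [Finset.mul_sum, ← Finset.sum_add_distrib]
    refine Finset.sum_congr rfl fun i _ => ?_
    ring
  -- the Vd-part of the sum, via the constraint identity
  have hQd : ∑ j, ∑ i, 2 * deriv φ ⟪θ j, x i⟫ * deriv (deriv φ) ⟪θ j, x i⟫ * ⟪x i, Vd j⟫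
      = Q0 + S2 := by
    have h1 : ∑ j, ∑ i, 2 * deriv φ ⟪θ j, x i⟫ * deriv (deriv φ) ⟪θ j, x i⟫ * ⟪x i, Vd j⟫
        = ⟪gradRegG φ x θ, Vd⟫ := (inner_gradRegG φ x θ Vd).symm
    have hdecomp : gradRegG φ x θ = vh φ x θ + ∑ i, lamV φ x θ i • gradF φ x i θ := by
      rw [vh]; abel
    rw [h1, hdecomp, inner_add_left, sum_inner (𝕜 := ℝ)]
    congr 1
    rw [hS2]
    refine Finset.sum_congr rfl fun i _ => ?_
    rw [real_inner_smul_left, inner_gradF φ x i θ Vd, hstar i]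
  -- solve for Q0
  have hQ0val : Q0 = S2 - 2 * S1 := by
    have := huniq
    rw [hsplit, hQd, hsym] at this
    linarith
  -- final assembly
  have ha : (∑ i, ∑ j,
      (2 * (deriv (deriv φ) ⟪θ j, x i⟫) ^ 2
        + 2 * deriv φ ⟪θ j, x i⟫ * deriv (deriv (deriv φ)) ⟪θ j, x i⟫
        - lamV φ x θ i * deriv (deriv φ) ⟪θ j, x i⟫) * ⟪x i, V j⟫ ^ 2)
      = ∑ j, ∑ i,
      (2 * (deriv (deriv φ) ⟪θ j, x i⟫) ^ 2
        + 2 * deriv φ ⟪θ j, x i⟫ * deriv (deriv (deriv φ)) ⟪θ j, x i⟫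
        - lamV φ x θ i * deriv (deriv φ) ⟪θ j, x i⟫) * ⟪x i, V j⟫ ^ 2 :=
    Finset.sum_comm
  have hb : (∑ j, ∑ i,
      (2 * (deriv (deriv φ) ⟪θ j, x i⟫) ^ 2
        + 2 * deriv φ ⟪θ j, x i⟫ * deriv (deriv (deriv φ)) ⟪θ j, x i⟫
        - lamV φ x θ i * deriv (deriv φ) ⟪θ j, x i⟫) * ⟪x i, V j⟫ ^ 2)
      = 2 * S1 - ∑ j, ∑ i, lamV φ x θ i
          * (deriv (deriv φ) ⟪θ j, x i⟫ * ⟪x i, V j⟫ ^ 2) := by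
    rw [hS1, Finset.mul_sum, ← Finset.sum_sub_distrib]
    refine Finset.sum_congr rfl fun j _ => ?_
    rw [Finset.mul_sum, ← Finset.sum_sub_distrib]
    refine Finset.sum_congr rfl fun i _ => ?_
    ring
  have hc : (∑ j, ∑ i, lamV φ x θ i
        * (deriv (deriv φ) ⟪θ j, x i⟫ * ⟪x i, V j⟫ ^ 2)) = S2 := by
    rw [hS2, Finset.sum_comm]
    refine Finset.sum_congr rfl fun i _ => ?_
    rw [Finset.mul_sum]
  have hTgt : (-2 * ∑ i, ∑ j,
        (2 * (deriv (deriv φ) ⟪θt t j, x i⟫) ^ 2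
          + 2 * deriv φ ⟪θt t j, x i⟫ * deriv (deriv (deriv φ)) ⟪θt t j, x i⟫
          - lamV φ x (θt t) i * deriv (deriv φ) ⟪θt t j, x i⟫)
        * ⟪x i, vh φ x (θt t) j⟫ ^ 2) = ⟪V, Vd⟫ + ⟪Vd, V⟫ := by
    rw [hsym, ← hQ0, hQ0val, ha, hb, hc]
    ring
  rw [hTgt]
  exact hN

end Flow
end Stmt14
namespace Stmt14
variable {n m d : ℕ} {φ : ℝ → ℝ} {x : Fin n → EuclideanSpace ℝ (Fin d)}

lemma coef_bound {a b g l c β ρ1 ρ2 : ℝ} (ha : ρ1 ≤ a) (hρ1 : 0 < ρ1) (hg : ρ2 ≤ g)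
    (hρ2 : 0 < ρ2) (hβ : 0 < β) (hnormal : β * |b| ≤ a ^ 2 * g)
    (hcdef : c = 2 * a * b - l * a) (hc : |c| ≤ β) :
    ρ1 * ρ2 ≤ 2 * b ^ 2 + 2 * a * g - l * b := by
  have ha0 : 0 < a := hρ1.trans_le ha
  have h1 : -(β * |b|) ≤ c * b := by
    have habs : |c * b| ≤ β * |b| := by
      rw [abs_mul]
      exact mul_le_mul_of_nonneg_right hc (abs_nonneg b)
    have := neg_abs_le (c * b)
    linarith
  have h2 : a * (2 * b ^ 2 + 2 * a * g - l * b) = 2 * a ^ 2 * g + c * b := by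
    rw [hcdef]; ring
  have hag : ρ1 * ρ2 ≤ a * g := mul_le_mul ha hg hρ2.le ha0.le
  have h3 : a * (ρ1 * ρ2) ≤ a * (2 * b ^ 2 + 2 * a * g - l * b) := by
    rw [h2]
    nlinarith [mul_le_mul_of_nonneg_left hag ha0.le]
  exact le_of_mul_le_mul_left h3 ha0

variable {μ : ℝ}

lemma frame_bound (hμ : 0 < μ)
    (hcoh : ∀ c : Fin n → ℝ, μ * ∑ i, (c i) ^ 2 ≤ ‖∑ i, c i • x i‖ ^ 2)
    (v : EuclideanSpace ℝ (Fin d)) (c : Fin n → ℝ) (hv : v = ∑ i, c i • x i) :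
    μ * ‖v‖ ^ 2 ≤ ∑ i, ⟪x i, v⟫ ^ 2 := by
  have hT0 : (0:ℝ) ≤ ∑ i, ⟪x i, v⟫ ^ 2 := Finset.sum_nonneg fun i _ => sq_nonneg _
  have hN : ‖v‖ ^ 2 = ∑ i, c i * ⟪x i, v⟫ := by
    rw [← real_inner_self_eq_norm_sq]
    nth_rewrite 1 [hv]
    rw [sum_inner (𝕜 := ℝ)]
    refine Finset.sum_congr rfl fun i _ => ?_
    rw [real_inner_smul_left]
  have hCS : (∑ i, c i * ⟪x i, v⟫) ^ 2 ≤ (∑ i, c i ^ 2) * (∑ i, ⟪x i, v⟫ ^ 2) :=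
    Finset.sum_mul_sq_le_sq_mul_sq _ _ _
  have hcoh' : μ * ∑ i, c i ^ 2 ≤ ‖v‖ ^ 2 := by rw [hv]; exact hcoh c
  rcases eq_or_lt_of_le (sq_nonneg ‖v‖) with hz | hpos
  · rw [← hz]
    simpa using hT0
  · have h4 : μ * (‖v‖ ^ 2) ^ 2 ≤ μ * ((∑ i, c i ^ 2) * (∑ i, ⟪x i, v⟫ ^ 2)) := by
      rw [hN]
      exact mul_le_mul_of_nonneg_left hCS hμ.le
    have h5 : (μ * ∑ i, c i ^ 2) * (∑ i, ⟪x i, v⟫ ^ 2)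
        ≤ ‖v‖ ^ 2 * ∑ i, ⟪x i, v⟫ ^ 2 :=
      mul_le_mul_of_nonneg_right hcoh' hT0
    have h6 : ‖v‖ ^ 2 * (μ * ‖v‖ ^ 2) ≤ ‖v‖ ^ 2 * ∑ i, ⟪x i, v⟫ ^ 2 := by nlinarith
    exact le_of_mul_le_mul_left h6 hpos
end Stmt14
namespace Stmt14
variable {n m d : ℕ} {φ : ℝ → ℝ} {x : Fin n → EuclideanSpace ℝ (Fin d)}

lemma deriv_val_bound {μ ρ1 ρ2 β : ℝ} (hμ : 0 < μ)
    (hcoh : ∀ c : Fin n → ℝ, μ * ∑ i, (c i) ^ 2 ≤ ‖∑ i, c i • x i‖ ^ 2)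
    (hρ1 : 0 < ρ1) (hρ2 : 0 < ρ2) (hφ' : ∀ z, ρ1 ≤ deriv φ z)
    (hφ''' : ∀ z, ρ2 ≤ deriv (deriv (deriv φ)) z) (hβ : 0 < β)
    (hnormal : ∀ z, β * |deriv (deriv φ) z| ≤ (deriv φ z) ^ 2 * deriv (deriv (deriv φ)) z)
    (θ : Param m d) (hsmall : ‖vh φ x θ‖ ^ 2 ≤ μ * β ^ 2) :
    -2 * ∑ i, ∑ j,
        (2 * (deriv (deriv φ) ⟪θ j, x i⟫) ^ 2
          + 2 * deriv φ ⟪θ j, x i⟫ * deriv (deriv (deriv φ)) ⟪θ j, x i⟫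
          - lamV φ x θ i * deriv (deriv φ) ⟪θ j, x i⟫)
        * ⟪x i, vh φ x θ j⟫ ^ 2
      ≤ -(ρ1 * ρ2 * μ) * ‖vh φ x θ‖ ^ 2 := by
  -- norm of each block is controlled
  have hnormj : ∀ j, ‖vh φ x θ j‖ ^ 2 ≤ μ * β ^ 2 := by
    intro j
    refine le_trans (le_trans ?_ (le_of_eq (PiLp.norm_sq_eq_of_L2 _ (vh φ x θ)).symm)) hsmall
    exact Finset.single_le_sum (f := fun j => ‖vh φ x θ j‖ ^ 2)
      (fun k _ => sq_nonneg _) (Finset.mem_univ j)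
  -- coefficient bound
  have hcb : ∀ (i : Fin n) (j : Fin m),
      |2 * deriv φ ⟪θ j, x i⟫ * deriv (deriv φ) ⟪θ j, x i⟫
        - lamV φ x θ i * deriv φ ⟪θ j, x i⟫| ≤ β := by
    intro i j
    set c : Fin n → ℝ := fun i => 2 * deriv φ ⟪θ j, x i⟫ * deriv (deriv φ) ⟪θ j, x i⟫
      - lamV φ x θ i * deriv φ ⟪θ j, x i⟫ with hcdef
    have h1 : μ * ∑ i, c i ^ 2 ≤ ‖vh φ x θ j‖ ^ 2 := by
      rw [vh_apply]
      exact hcoh c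
    have h2 : c i ^ 2 ≤ ∑ k, c k ^ 2 :=
      Finset.single_le_sum (f := fun k => c k ^ 2) (fun k _ => sq_nonneg _) (Finset.mem_univ i)
    have h3 : c i ^ 2 ≤ β ^ 2 := by
      have := hnormj j
      have h4 : μ * c i ^ 2 ≤ μ * β ^ 2 := by
        calc μ * c i ^ 2 ≤ μ * ∑ k, c k ^ 2 := by
              exact mul_le_mul_of_nonneg_left h2 hμ.le
        _ ≤ ‖vh φ x θ j‖ ^ 2 := h1
        _ ≤ μ * β ^ 2 := this
      exact le_of_mul_le_mul_left h4 hμ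
    have : |c i| ≤ β := by
      nlinarith [sq_abs (c i), abs_nonneg (c i)]
    exact this
  -- per-term coefficient lower bound
  have hK : ∀ (i : Fin n) (j : Fin m), ρ1 * ρ2 ≤
      2 * (deriv (deriv φ) ⟪θ j, x i⟫) ^ 2
        + 2 * deriv φ ⟪θ j, x i⟫ * deriv (deriv (deriv φ)) ⟪θ j, x i⟫
        - lamV φ x θ i * deriv (deriv φ) ⟪θ j, x i⟫ := by
    intro i j
    exact coef_bound (hφ' _) hρ1 (hφ''' _) hρ2 hβ (hnormal _) rfl (hcb i j)
  -- frame bound per block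
  have hPsq : ∀ j, μ * ‖vh φ x θ j‖ ^ 2 ≤ ∑ i, ⟪x i, vh φ x θ j⟫ ^ 2 := fun j =>
    frame_bound hμ hcoh _ _ (vh_apply θ j)
  -- chain of inequalities
  have hT1 : ρ1 * ρ2 * ∑ i, ∑ j, ⟪x i, vh φ x θ j⟫ ^ 2
      ≤ ∑ i, ∑ j,
        (2 * (deriv (deriv φ) ⟪θ j, x i⟫) ^ 2
          + 2 * deriv φ ⟪θ j, x i⟫ * deriv (deriv (deriv φ)) ⟪θ j, x i⟫
          - lamV φ x θ i * deriv (deriv φ) ⟪θ j, x i⟫) * ⟪x i, vh φ x θ j⟫ ^ 2 := by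
    rw [Finset.mul_sum]
    refine Finset.sum_le_sum fun i _ => ?_
    rw [Finset.mul_sum]
    refine Finset.sum_le_sum fun j _ => ?_
    exact mul_le_mul_of_nonneg_right (hK i j) (sq_nonneg _)
  have hT2 : μ * ‖vh φ x θ‖ ^ 2 ≤ ∑ i, ∑ j, ⟪x i, vh φ x θ j⟫ ^ 2 := by
    rw [Finset.sum_comm, PiLp.norm_sq_eq_of_L2, Finset.mul_sum]
    exact Finset.sum_le_sum fun j _ => hPsq j
  have hρρ : 0 < ρ1 * ρ2 := mul_pos hρ1 hρ2
  have hh0 : 0 ≤ ‖vh φ x θ‖ ^ 2 := sq_nonneg _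
  nlinarith [mul_le_mul_of_nonneg_left hT2 hρρ.le, mul_pos hρρ hμ]

end Stmt14

open Set in
set_option maxHeartbeats 2000000 in
set_option synthInstance.maxHeartbeats 400000 in
/-- once the Riemannian gradient is ≤ √μ·β, its squared norm decays
exponentially: ‖∇G(θ(t))‖² ≤ ‖∇G(θ(t0))‖² e^{−(t−t0)ρ1ρ2μ} for t ≥ t0. -/
theorem stmt_14
    (n m d : ℕ) (hn : 1 ≤ n) (hm : 1 ≤ m) (hd : 1 ≤ d)
    (x : Fin n → EuclideanSpace ℝ (Fin d)) (hx : ∀ i, ‖x i‖ = 1)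
    (μ : ℝ) (hμ : 0 < μ)
    (hcoh : ∀ c : Fin n → ℝ, μ * ∑ i, (c i) ^ 2 ≤ ‖∑ i, c i • x i‖ ^ 2)
    (y : Fin n → ℝ)
    (φ : ℝ → ℝ) (hφ : ContDiff ℝ (⊤ : ℕ∞) φ)
    (ρ1 ρ2 : ℝ) (hρ1 : 0 < ρ1) (hρ2 : 0 < ρ2)
    (hφ' : ∀ z, ρ1 ≤ deriv φ z)
    (hφ''' : ∀ z, ρ2 ≤ deriv (deriv (deriv φ)) z)
    (β : ℝ) (hβ : 0 < β)
    (hnormal : ∀ z, β * |deriv (deriv φ) z| ≤ (deriv φ z) ^ 2 * deriv (deriv (deriv φ)) z)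
    (θt : ℝ → Param m d)
    (hmem : ∀ t, 0 ≤ t → ∀ i, netF φ x i (θt t) = y i)
    (hflow : ∀ t, 0 ≤ t → HasDerivAt θt (-(rgradG φ x (θt t))) t)
    (t0 : ℝ) (ht0 : 0 ≤ t0)
    (hsmall : ‖rgradG φ x (θt t0)‖ ≤ Real.sqrt μ * β) :
    ∀ t, t0 ≤ t →
      ‖rgradG φ x (θt t)‖ ^ 2
        ≤ ‖rgradG φ x (θt t0)‖ ^ 2 * Real.exp (-((t - t0) * (ρ1 * ρ2 * μ))) := by
  intro t htt0
  have hveq : ∀ p : Param m d, rgradG φ x p = Stmt14.vh φ x p := fun p =>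
    Stmt14.rgradG_eq_vh hμ hcoh hρ1 hφ' hm p
  have hflow' : ∀ s, 0 ≤ s → HasDerivAt θt (-(Stmt14.vh φ x (θt s))) s := fun s hs => by
    rw [← hveq]; exact hflow s hs
  set h : ℝ → ℝ := fun s => ‖Stmt14.vh φ x (θt s)‖ ^ 2 with hh
  set D : ℝ → ℝ := fun s => -2 * ∑ i, ∑ j,
      (2 * (deriv (deriv φ) ⟪θt s j, x i⟫) ^ 2
        + 2 * deriv φ ⟪θt s j, x i⟫ * deriv (deriv (deriv φ)) ⟪θt s j, x i⟫
        - Stmt14.lamV φ x (θt s) i * deriv (deriv φ) ⟪θt s j, x i⟫)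
      * ⟪x i, Stmt14.vh φ x (θt s) j⟫ ^ 2 with hD0
  have hD : ∀ s, 0 ≤ s → HasDerivAt h (D s) s := fun s hs =>
    Stmt14.hasDerivAt_normsq_vh hφ hμ hcoh hρ1 hφ' hm hflow' s hs
  have hDle : ∀ s, 0 ≤ s → h s ≤ μ * β ^ 2 → D s ≤ -(ρ1 * ρ2 * μ) * h s := fun s hs hsm =>
    Stmt14.deriv_val_bound hμ hcoh hρ1 hρ2 hφ' hφ''' hβ hnormal (θt s) hsm
  have hcont : ∀ s, 0 ≤ s → ContinuousAt h s := fun s hs => (hD s hs).continuousAt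
  have hsmall2 : h t0 ≤ μ * β ^ 2 := by
    have h1 : ‖Stmt14.vh φ x (θt t0)‖ ≤ Real.sqrt μ * β := by rw [← hveq]; exact hsmall
    have h2 : ‖Stmt14.vh φ x (θt t0)‖ ^ 2 ≤ (Real.sqrt μ * β) ^ 2 :=
      pow_le_pow_left₀ (norm_nonneg _) h1 2
    calc h t0 ≤ (Real.sqrt μ * β) ^ 2 := h2
    _ = μ * β ^ 2 := by rw [mul_pow, Real.sq_sqrt hμ.le]
  have hc0 : 0 < ρ1 * ρ2 * μ := mul_pos (mul_pos hρ1 hρ2) hμ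
  -- invariance of the region h ≤ μ β²
  have hinv : ∀ s, t0 ≤ s → h s ≤ μ * β ^ 2 := by
    intro b hb
    by_contra hgt
    push_neg at hgt
    set T : Set ℝ := {s | s ∈ Icc t0 b ∧ ∀ u ∈ Icc t0 s, h u ≤ μ * β ^ 2} with hT
    have hne : t0 ∈ T := by
      refine ⟨⟨le_refl t0, hb⟩, fun u hu => ?_⟩
      have : u = t0 := le_antisymm hu.2 hu.1
      rw [this]; exact hsmall2
    have hbdd : BddAbove T := ⟨b, fun s hs => hs.1.2⟩
    set τ := sSup T with hτ0
    have hτmem : τ ∈ Icc t0 b :=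
      ⟨le_csSup hbdd hne, csSup_le ⟨t0, hne⟩ fun s hs => hs.1.2⟩
    have hτ00 : (0:ℝ) ≤ τ := ht0.trans hτmem.1
    have hτub : ∀ u, t0 ≤ u → u < τ → h u ≤ μ * β ^ 2 := by
      intro u hu huτ
      obtain ⟨s, hsT, hus⟩ := exists_lt_of_lt_csSup ⟨t0, hne⟩ huτ
      exact hsT.2 u ⟨hu, hus.le⟩
    have hτle : h τ ≤ μ * β ^ 2 := by
      rcases eq_or_lt_of_le hτmem.1 with heq | hlt
      · rw [← heq]; exact hsmall2
      · have hcτ : ContinuousAt h τ := hcont τ hτ00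
        refine le_of_tendsto (hcτ.continuousWithinAt (s := Iio τ)) ?_
        filter_upwards [Ioo_mem_nhdsLT_of_mem (Set.mem_Ioc.2 ⟨hlt, le_refl τ⟩)] with u hu
        exact hτub u hu.1.le hu.2
    have hτb : τ < b := by
      rcases eq_or_lt_of_le hτmem.2 with heq | hlt
      · exact absurd (heq ▸ hτle) (not_le.2 hgt)
      · exact hlt
    -- in both cases h is ≤ μβ² slightly to the right of τ
    have hright : ∃ ε > 0, ∀ u, τ < u → u < τ + ε → h u ≤ μ * β ^ 2 := by
      rcases eq_or_lt_of_le hτle with heq | hlt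
      · -- boundary case: strict decrease since D τ < 0
        have hDτ : D τ < 0 := by
          have := hDle τ hτ00 hτle
          have hhτ : 0 < h τ := by
            rw [heq]
            positivity
          nlinarith
        have hslope : Filter.Tendsto (slope h τ) (nhdsWithin τ (Ioi τ)) (nhds (D τ)) := by
          have h9 := hasDerivWithinAt_iff_tendsto_slope.1
            ((hD τ hτ00).hasDerivWithinAt (s := Ioi τ))
          have hni : τ ∉ Ioi τ := by simp
          rwa [Set.diff_singleton_eq_self hni] at h9
        have hev : ∀ᶠ u in nhdsWithin τ (Ioi τ), slope h τ u < 0 :=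
          hslope.eventually_lt_const hDτ
        obtain ⟨u', hu', hsub⟩ := mem_nhdsGT_iff_exists_Ioo_subset.1 hev
        refine ⟨u' - τ, by linarith [Set.mem_Ioi.1 hu'], fun u h1 h2 => ?_⟩
        have : slope h τ u < 0 := hsub ⟨h1, by linarith⟩
        rw [slope_def_field] at this
        have hden : 0 < u - τ := by linarith
        have h8 : h u - h τ < 0 := by
          have h7 := mul_neg_of_neg_of_pos this hden
          rw [div_mul_cancel₀] at h7
          · linarith
          · exact ne_of_gt hden
        rw [heq] at h8
        linarith
      · -- interior case: continuity
        have hcτ : ContinuousAt h τ := hcont τ hτ00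
        have hev : ∀ᶠ u in nhds τ, h u < μ * β ^ 2 := hcτ.eventually_lt_const hlt
        obtain ⟨ε, hε, hball⟩ := Metric.eventually_nhds_iff.1 hev
        exact ⟨ε, hε, fun u h1 h2 => le_of_lt (hball (by
          rw [Real.dist_eq, abs_lt]; constructor <;> linarith))⟩
    obtain ⟨ε, hε, hsmallr⟩ := hright
    set s₁ := min b (τ + ε / 2) with hs₁
    have hs1τ : τ < s₁ := lt_min hτb (by linarith)
    have hs1T : s₁ ∈ T := by
      refine ⟨⟨hτmem.1.trans hs1τ.le, min_le_left _ _⟩, fun u hu => ?_⟩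
      rcases lt_trichotomy u τ with hc | hc | hc
      · exact hτub u hu.1 hc
      · rw [hc]; exact hτle
      · refine hsmallr u hc ?_
        have := hu.2
        have h5 : s₁ ≤ τ + ε / 2 := min_le_right _ _
        linarith
    have := le_csSup hbdd hs1T
    linarith
  -- Grönwall
  have key := le_gronwallBound_of_liminf_deriv_right_le (f := h) (f' := D)
    (δ := h t0) (K := -(ρ1 * ρ2 * μ)) (ε := 0) (a := t0) (b := t)
    (fun s hs => (hcont s (ht0.trans hs.1)).continuousWithinAt)
    (fun s hs r hr => ((hD s (ht0.trans hs.1)).hasDerivWithinAt).liminf_right_slope_le hr)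
    (le_refl (h t0))
    (fun s hs => by
      rw [add_zero]
      exact hDle s (ht0.trans hs.1) (hinv s hs.1))
    t ⟨htt0, le_refl t⟩
  rw [gronwallBound_ε0] at key
  simp only [hveq]
  calc ‖Stmt14.vh φ x (θt t)‖ ^ 2 = h t := rfl
  _ ≤ h t0 * Real.exp (-(ρ1 * ρ2 * μ) * (t - t0)) := key
  _ = ‖Stmt14.vh φ x (θt t0)‖ ^ 2 * Real.exp (-((t - t0) * (ρ1 * ρ2 * μ))) := by
      rw [show -(ρ1 * ρ2 * μ) * (t - t0) = -((t - t0) * (ρ1 * ρ2 * μ)) by ring]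
end
end

section
/- Let φ be infinitely differentiable with φ'(z) ≥ ρ1 and φ'''(z) ≥ ρ2 for all z ∈ ℝ, where ρ1, ρ2 > 0, satisfying β-normality with constant β > 0, and assume the coherence assumption with constant μ > 0. Let θ : [0, ∞) → ℝ^{md} be a Riemannian gradient-flow trajectory of G on the zero-loss set. Then for every ε > 0 and every time t ≥ G(θ(0)) / (μ β²) + log(max(μ β² / ε², 1)) / (ρ1 ρ2 μ), the flow is ε-stationary: ‖∇G(θ(t))‖ ≤ ε. -/
open scoped RealInnerProductSpace
open Real Filter

noncomputable section

namespace S15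
open Matrix Topology

variable {n m d : ℕ} (φ : ℝ → ℝ) (x : Fin n → EuclideanSpace ℝ (Fin d))

def q1 (θ : Param m d) (i : Fin n) (j : Fin m) : ℝ := deriv φ ⟪θ j, x i⟫
def q2 (θ : Param m d) (i : Fin n) (j : Fin m) : ℝ := deriv (deriv φ) ⟪θ j, x i⟫
def q3 (θ : Param m d) (i : Fin n) (j : Fin m) : ℝ := deriv (deriv (deriv φ)) ⟪θ j, x i⟫

def Km (θ : Param m d) : Matrix (Fin n) (Fin n) ℝ :=
  Matrix.of fun i k => (∑ j, q1 φ x θ i j * q1 φ x θ k j) * ⟪x i, x k⟫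

def bv (θ : Param m d) : Fin n → ℝ :=
  fun i => ∑ k, (∑ j, 2 * q1 φ x θ i j * q1 φ x θ k j * q2 φ x θ k j) * ⟪x i, x k⟫

def lam (θ : Param m d) : Fin n → ℝ :=
  ((Km φ x θ).det)⁻¹ • ((Km φ x θ).adjugate *ᵥ bv φ x θ)

def cc (θ : Param m d) (i : Fin n) (j : Fin m) : ℝ :=
  q1 φ x θ i j * (2 * q2 φ x θ i j - lam φ x θ i)

def vv (θ : Param m d) : Param m d := WithLp.toLp 2 (fun j => ∑ i, cc φ x θ i j • x i)

def uu (θ : Param m d) (i : Fin n) (j : Fin m) : ℝ := ∑ k, cc φ x θ k j * ⟪x k, x i⟫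

def NN (θ : Param m d) : ℝ := ∑ j, ⟪vv φ x θ j, vv φ x θ j⟫

lemma inner_x_vv (θ : Param m d) (i : Fin n) (j : Fin m) :
    ⟪x i, vv φ x θ j⟫ = uu φ x θ i j := by
  simp only [vv, uu, PiLp.toLp_apply, inner_sum, real_inner_smul_right]
  exact Finset.sum_congr rfl fun k _ => by rw [real_inner_comm]

lemma inner_vv_x (θ : Param m d) (i : Fin n) (j : Fin m) :
    ⟪vv φ x θ j, x i⟫ = uu φ x θ i j := by
  rw [real_inner_comm]; exact inner_x_vv φ x θ i j

lemma norm_sum_sq (a : Fin n → ℝ) :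
    ‖∑ i, a i • x i‖ ^ 2 = ∑ i, ∑ k, a i * a k * ⟪x i, x k⟫ := by
  rw [← real_inner_self_eq_norm_sq, sum_inner]
  refine Finset.sum_congr rfl fun i _ => ?_
  rw [real_inner_smul_left, inner_sum, Finset.mul_sum]
  refine Finset.sum_congr rfl fun k _ => ?_
  rw [real_inner_smul_right]; ring


section PD
variable {n m d : ℕ} (φ : ℝ → ℝ) (x : Fin n → EuclideanSpace ℝ (Fin d)) {μ ρ1 : ℝ}

lemma km_key (θ : Param m d) (c : Fin n → ℝ) :
    dotProduct c (Km φ x θ *ᵥ c) = ∑ j, ‖∑ i, (c i * q1 φ x θ i j) • x i‖ ^ 2 := by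
  have h : ∀ j : Fin m, ‖∑ i, (c i * q1 φ x θ i j) • x i‖ ^ 2
      = ∑ i, ∑ k, (c i * q1 φ x θ i j) * (c k * q1 φ x θ k j) * ⟪x i, x k⟫ :=
    fun j => norm_sum_sq x _
  simp only [h]
  rw [Finset.sum_comm]
  simp only [dotProduct, Matrix.mulVec, Matrix.of_apply, Km, dotProduct,
    Finset.mul_sum, Finset.sum_mul]
  refine Finset.sum_congr rfl fun i _ => ?_
  rw [Finset.sum_comm]
  refine Finset.sum_congr rfl fun k _ => ?_
  exact Finset.sum_congr rfl fun j _ => by ring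

lemma km_posdef (hm : 1 ≤ m) (hμ : 0 < μ) (hρ1 : 0 < ρ1)
    (hφ' : ∀ z, ρ1 ≤ deriv φ z)
    (hcoh : ∀ c : Fin n → ℝ, μ * ∑ i, (c i) ^ 2 ≤ ‖∑ i, c i • x i‖ ^ 2)
    (θ : Param m d) : (Km φ x θ).PosDef := by
  rw [Matrix.posDef_iff_dotProduct_mulVec]
  constructor
  · ext i k
    simp only [Matrix.conjTranspose_apply, Km, Matrix.of_apply, star_trivial]
    rw [real_inner_comm]
    congr 1
    exact Finset.sum_congr rfl fun j _ => mul_comm _ _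
  · intro c hc
    have hstar : (star c : Fin n → ℝ) = c := funext fun i => star_trivial _
    rw [hstar, km_key]
    obtain ⟨i0, hi0⟩ : ∃ i, c i ≠ 0 := by
      by_contra h; push_neg at h; exact hc (funext h)
    have hm' : (0:ℕ) < m := hm
    set j0 : Fin m := ⟨0, hm'⟩
    have hq1pos : ∀ i j, (0:ℝ) < q1 φ x θ i j := fun i j => lt_of_lt_of_le hρ1 (hφ' _)
    have h2 : μ * ∑ i, (c i * q1 φ x θ i j0) ^ 2 ≤ ‖∑ i, (c i * q1 φ x θ i j0) • x i‖ ^ 2 :=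
      hcoh _
    have h3 : (c i0 * q1 φ x θ i0 j0) ^ 2 ≤ ∑ i, (c i * q1 φ x θ i j0) ^ 2 :=
      Finset.single_le_sum (f := fun i => (c i * q1 φ x θ i j0) ^ 2)
        (fun i _ => sq_nonneg _) (Finset.mem_univ i0)
    have h4 : 0 < (c i0 * q1 φ x θ i0 j0) ^ 2 := by
      have : c i0 * q1 φ x θ i0 j0 ≠ 0 := mul_ne_zero hi0 (ne_of_gt (hq1pos i0 j0))
      positivity
    have h5 : ‖∑ i, (c i * q1 φ x θ i j0) • x i‖ ^ 2
        ≤ ∑ j, ‖∑ i, (c i * q1 φ x θ i j) • x i‖ ^ 2 :=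
      Finset.single_le_sum (f := fun j => ‖∑ i, (c i * q1 φ x θ i j) • x i‖ ^ 2)
        (fun j _ => sq_nonneg _) (Finset.mem_univ j0)
    calc (0:ℝ) < μ * (c i0 * q1 φ x θ i0 j0) ^ 2 := by positivity
      _ ≤ μ * ∑ i, (c i * q1 φ x θ i j0) ^ 2 := by
          exact mul_le_mul_of_nonneg_left h3 (le_of_lt hμ)
      _ ≤ _ := le_trans h2 h5

lemma km_mulVec_lam (θ : Param m d) (hdet : (Km φ x θ).det ≠ 0) :
    Km φ x θ *ᵥ lam φ x θ = bv φ x θ := by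
  unfold lam
  rw [Matrix.mulVec_smul, Matrix.mulVec_mulVec, Matrix.mul_adjugate,
    Matrix.smul_mulVec, Matrix.one_mulVec, smul_smul, inv_mul_cancel₀ hdet, one_smul]

lemma ker_id (θ : Param m d) (hdet : (Km φ x θ).det ≠ 0) (i : Fin n) :
    ∑ j, q1 φ x θ i j * uu φ x θ i j = 0 := by
  have h1 : ∑ j, q1 φ x θ i j * uu φ x θ i j
      = bv φ x θ i - ∑ k, Km φ x θ i k * lam φ x θ k := by
    simp only [uu, bv, Km, cc, Matrix.of_apply, Finset.mul_sum, Finset.sum_mul]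
    rw [Finset.sum_comm, ← Finset.sum_sub_distrib]
    refine Finset.sum_congr rfl fun k _ => ?_
    rw [real_inner_comm (x k) (x i), ← Finset.sum_sub_distrib]
    exact Finset.sum_congr rfl fun j _ => by ring
  have h2 : ∑ k, Km φ x θ i k * lam φ x θ k = bv φ x θ i := by
    have := congrFun (km_mulVec_lam φ x θ hdet) i
    simpa [Matrix.mulVec, dotProduct] using this
  rw [h1, h2, sub_self]

end PD

section Proj
variable {n m d : ℕ} (φ : ℝ → ℝ) (x : Fin n → EuclideanSpace ℝ (Fin d))

lemma jacobian_apply (θ : Param m d) (w : Param m d) (i : Fin n) :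
    jacobian φ x θ w i = ∑ j, q1 φ x θ i j * ⟪x i, w j⟫ := by
  simp only [jacobian, LinearMap.pi_apply, ContinuousLinearMap.coe_coe, innerSL_apply_apply]
  rw [PiLp.inner_apply]
  refine Finset.sum_congr rfl fun j _ => ?_
  rw [show gradF φ x i θ j = q1 φ x θ i j • x i from rfl, real_inner_smul_left]

lemma gradRegG_apply (θ : Param m d) (j : Fin m) :
    gradRegG φ x θ j = ∑ i, (2 * q1 φ x θ i j * q2 φ x θ i j) • x i := rfl

lemma rgrad_eq (θ : Param m d) (hdet : (Km φ x θ).det ≠ 0) :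
    rgradG φ x θ = vv φ x θ := by
  have hmem : vv φ x θ ∈ LinearMap.ker (jacobian φ x θ) := by
    rw [LinearMap.mem_ker]
    funext i
    rw [jacobian_apply]
    simp only [inner_x_vv]
    exact ker_id φ x θ hdet i
  have hOrth : ∀ w ∈ LinearMap.ker (jacobian φ x θ),
      ⟪gradRegG φ x θ - vv φ x θ, w⟫ = 0 := by
    intro w hw
    have hw' : ∀ i, ∑ j, q1 φ x θ i j * ⟪x i, w j⟫ = 0 := by
      intro i
      rw [← jacobian_apply, LinearMap.mem_ker.mp hw]
      rfl
    rw [PiLp.inner_apply]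
    have hblock : ∀ j : Fin m, ⟪(gradRegG φ x θ - vv φ x θ) j, w j⟫
        = ∑ i, lam φ x θ i * (q1 φ x θ i j * ⟪x i, w j⟫) := by
      intro j
      have hsub : (gradRegG φ x θ - vv φ x θ) j
          = ∑ i, (lam φ x θ i * q1 φ x θ i j) • x i := by
        have he : (gradRegG φ x θ - vv φ x θ) j = gradRegG φ x θ j - vv φ x θ j := rfl
        rw [he, gradRegG_apply, vv, ← Finset.sum_sub_distrib]
        refine Finset.sum_congr rfl fun i _ => ?_
        rw [← sub_smul]
        congr 1
        unfold cc
        ring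
      rw [hsub, sum_inner]
      exact Finset.sum_congr rfl fun i _ => by rw [real_inner_smul_left]; ring
    simp only [hblock]
    rw [Finset.sum_comm]
    simp only [← Finset.mul_sum]
    simp only [hw', mul_zero, Finset.sum_const_zero]
  exact Submodule.eq_starProjection_of_mem_of_inner_eq_zero hmem hOrth

lemma vv_inner_self (θ : Param m d) (j : Fin m) :
    ⟪vv φ x θ j, vv φ x θ j⟫ = ∑ i, cc φ x θ i j * uu φ x θ i j := by
  have h : ⟪∑ i, cc φ x θ i j • x i, vv φ x θ j⟫ = ∑ i, cc φ x θ i j * uu φ x θ i j := by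
    rw [sum_inner]
    exact Finset.sum_congr rfl fun i _ => by rw [real_inner_smul_left, inner_x_vv]
  exact h

lemma NN_eq_norm_sq (θ : Param m d) (hdet : (Km φ x θ).det ≠ 0) :
    NN φ x θ = ‖rgradG φ x θ‖ ^ 2 := by
  rw [rgrad_eq φ x θ hdet, NN]
  rw [PiLp.norm_sq_eq_of_L2]
  exact Finset.sum_congr rfl fun j _ => real_inner_self_eq_norm_sq _

lemma NN_nonneg (θ : Param m d) : 0 ≤ NN φ x θ :=
  Finset.sum_nonneg fun j _ => real_inner_self_nonneg

end Proj

lemma diffAt_det {N : ℕ} {M : ℝ → Matrix (Fin N) (Fin N) ℝ} {t : ℝ}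
    (h : ∀ a b, DifferentiableAt ℝ (fun s => M s a b) t) :
    DifferentiableAt ℝ (fun s => (M s).det) t := by
  simp only [Matrix.det_apply']
  exact DifferentiableAt.fun_sum fun σ _ =>
    DifferentiableAt.const_mul (DifferentiableAt.fun_finsetProd fun a _ => h (σ a) a) _

section Traj
variable {n m d : ℕ} {φ : ℝ → ℝ} {x : Fin n → EuclideanSpace ℝ (Fin d)}
  {μ ρ1 ρ2 β : ℝ} {θt : ℝ → Param m d}

set_option maxHeartbeats 4000000 in
set_option synthInstance.maxHeartbeats 1000000 in
lemma evolution (hφ : ContDiff ℝ (⊤ : ℕ∞) φ) (hm : 1 ≤ m)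
    (hμ : 0 < μ) (hρ1 : 0 < ρ1) (hρ2 : 0 < ρ2) (hβ : 0 < β)
    (hφ' : ∀ z, ρ1 ≤ deriv φ z)
    (hφ''' : ∀ z, ρ2 ≤ deriv (deriv (deriv φ)) z)
    (hnormal : ∀ z, β * |deriv (deriv φ) z| ≤ (deriv φ z) ^ 2 * deriv (deriv (deriv φ)) z)
    (hcoh : ∀ c : Fin n → ℝ, μ * ∑ i, (c i) ^ 2 ≤ ‖∑ i, c i • x i‖ ^ 2)
    (hflow : ∀ t, 0 ≤ t → HasDerivAt θt (-(rgradG φ x (θt t))) t)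
    (t : ℝ) (ht : 0 ≤ t) :
    HasDerivAt (fun s => regG φ x (θt s)) (-(NN φ x (θt t))) t ∧
    ∃ N', HasDerivAt (fun s => NN φ x (θt s)) N' t ∧
      (NN φ x (θt t) ≤ μ * β ^ 2 → N' ≤ -(2 * (ρ1 * ρ2 * μ)) * NN φ x (θt t)) := by
  have hdet : ∀ θ : Param m d, (Km φ x θ).det ≠ 0 :=
    fun θ => (km_posdef φ x hm hμ hρ1 hφ' hcoh θ).det_pos.ne'
  have hA : ∀ (i : Fin n) (j : Fin m),
      HasDerivAt (fun s => (⟪θt s j, x i⟫ : ℝ)) (-(uu φ x (θt t) i j)) t := by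
    intro i j
    have hproj : HasDerivAt (fun s => θt s j) (-(rgradG φ x (θt t)) j) t := by
      have h := (PiLp.proj (𝕜 := ℝ) 2 (fun _ : Fin m => EuclideanSpace ℝ (Fin d))
        j).hasFDerivAt.comp_hasDerivAt t (hflow t ht)
      simpa [Function.comp_def] using h
    have h2 := hproj.inner ℝ (hasDerivAt_const t (x i))
    have hval : (⟪θt t j, (0 : EuclideanSpace ℝ (Fin d))⟫ : ℝ)
        + ⟪-(rgradG φ x (θt t)) j, x i⟫ = -(uu φ x (θt t) i j) := by
      rw [inner_zero_right, zero_add]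
      rw [inner_neg_left, rgrad_eq φ x _ (hdet _), inner_vv_x]
    rwa [hval] at h2
  have h1 := contDiff_infty_iff_deriv.mp hφ
  have h2 := contDiff_infty_iff_deriv.mp h1.2
  have h3 := contDiff_infty_iff_deriv.mp h2.2
  have hq1D : ∀ (i : Fin n) (j : Fin m),
      HasDerivAt (fun s => q1 φ x (θt s) i j)
        (q2 φ x (θt t) i j * -(uu φ x (θt t) i j)) t :=
    fun i j => ((h2.1 _).hasDerivAt).comp t (hA i j)
  have hq2D : ∀ (i : Fin n) (j : Fin m),
      HasDerivAt (fun s => q2 φ x (θt s) i j)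
        (q3 φ x (θt t) i j * -(uu φ x (θt t) i j)) t :=
    fun i j => ((h3.1 _).hasDerivAt).comp t (hA i j)
  have hKmD : ∀ a b, DifferentiableAt ℝ (fun s => Km φ x (θt s) a b) t := by
    intro a b
    simp only [Km, Matrix.of_apply]
    exact (DifferentiableAt.fun_sum fun j _ =>
      ((hq1D a j).differentiableAt.mul (hq1D b j).differentiableAt)).mul_const _
  have hdetD : DifferentiableAt ℝ (fun s => (Km φ x (θt s)).det) t := diffAt_det hKmD
  have hadjD : ∀ a b, DifferentiableAt ℝ (fun s => (Km φ x (θt s)).adjugate a b) t := by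
    intro a b
    simp only [Matrix.adjugate_apply]
    apply diffAt_det
    intro a' b'
    by_cases hab : a' = b
    · simp only [Matrix.updateRow_apply, hab, if_true]
      exact differentiableAt_const _
    · simp only [Matrix.updateRow_apply, hab, if_false]
      exact hKmD a' b'
  have hbvD : ∀ i, DifferentiableAt ℝ (fun s => bv φ x (θt s) i) t := by
    intro i
    simp only [bv]
    exact DifferentiableAt.fun_sum fun k _ => (DifferentiableAt.fun_sum fun j _ =>
      (((hq1D i j).differentiableAt.const_mul 2).mul
        (hq1D k j).differentiableAt).mul (hq2D k j).differentiableAt).mul_const _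
  have hlamD : ∀ i, DifferentiableAt ℝ (fun s => lam φ x (θt s) i) t := by
    intro i
    simp only [lam, Pi.smul_apply, smul_eq_mul, Matrix.mulVec, dotProduct]
    exact (hdetD.inv (hdet _)).mul (DifferentiableAt.fun_sum fun k _ => (hadjD i k).mul (hbvD k))
  set dL : Fin n → ℝ := fun i => deriv (fun s => lam φ x (θt s) i) t with hdL
  have hlam' : ∀ i, HasDerivAt (fun s => lam φ x (θt s) i) (dL i) t :=
    fun i => (hlamD i).hasDerivAt
  set ccD : Fin n → Fin m → ℝ := fun i j =>
    q2 φ x (θt t) i j * -(uu φ x (θt t) i j) * (2 * q2 φ x (θt t) i j - lam φ x (θt t) i)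
      + q1 φ x (θt t) i j * (2 * (q3 φ x (θt t) i j * -(uu φ x (θt t) i j)) - dL i) with hccD
  have hccD' : ∀ i j, HasDerivAt (fun s => cc φ x (θt s) i j) (ccD i j) t := by
    intro i j
    simp only [cc]
    exact (hq1D i j).mul (((hq2D i j).const_mul 2).sub (hlam' i))
  have hvvD : ∀ j, HasDerivAt (fun s => vv φ x (θt s) j) (∑ i, ccD i j • x i) t := by
    intro j
    have hvs : ∀ s, vv φ x (θt s) j = ∑ i, cc φ x (θt s) i j • x i := fun s => rfl
    simp only [hvs]
    exact HasDerivAt.fun_sum fun i _ => (hccD' i j).smul_const _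
  have hker : ∀ i, ∑ j, q1 φ x (θt t) i j * uu φ x (θt t) i j = 0 :=
    fun i => ker_id φ x _ (hdet _) i
  constructor
  · have hG : HasDerivAt (fun s => regG φ x (θt s))
        (∑ i, ∑ j, (2 : ℝ) * q1 φ x (θt t) i j ^ (2 - 1)
          * (q2 φ x (θt t) i j * -(uu φ x (θt t) i j))) t := by
      simp only [regG]
      exact HasDerivAt.fun_sum fun i _ => HasDerivAt.fun_sum fun j _ => (hq1D i j).pow 2
    have hval : (∑ i, ∑ j, (2:ℝ) * q1 φ x (θt t) i j ^ (2-1)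
          * (q2 φ x (θt t) i j * -(uu φ x (θt t) i j))) = -(NN φ x (θt t)) := by
      have e0 : NN φ x (θt t) = ∑ j, ∑ i, cc φ x (θt t) i j * uu φ x (θt t) i j :=
        Finset.sum_congr rfl fun j _ => vv_inner_self φ x _ j
      have e1 : ∀ i : Fin n, ∑ j, cc φ x (θt t) i j * uu φ x (θt t) i j
          = ∑ j, 2 * q1 φ x (θt t) i j * q2 φ x (θt t) i j * uu φ x (θt t) i j := by
        intro i
        have e2 : ∑ j, cc φ x (θt t) i j * uu φ x (θt t) i j
            = ∑ j, (2 * q1 φ x (θt t) i j * q2 φ x (θt t) i j * uu φ x (θt t) i j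
              - lam φ x (θt t) i * (q1 φ x (θt t) i j * uu φ x (θt t) i j)) :=
          Finset.sum_congr rfl fun j _ => by simp only [cc]; ring
        rw [e2, Finset.sum_sub_distrib, ← Finset.mul_sum, hker, mul_zero, sub_zero]
      rw [e0]
      conv_rhs => rw [Finset.sum_comm]
      rw [← Finset.sum_neg_distrib]
      refine Finset.sum_congr rfl fun i _ => ?_
      rw [e1 i, ← Finset.sum_neg_distrib]
      exact Finset.sum_congr rfl fun j _ => by ring
    rwa [hval] at hG
  · set N' : ℝ := ∑ j, ((⟪vv φ x (θt t) j, ∑ i, ccD i j • x i⟫ : ℝ)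
      + ⟪∑ i, ccD i j • x i, vv φ x (θt t) j⟫) with hN'def
    refine ⟨N', ?_, ?_⟩
    · simp only [NN]
      exact HasDerivAt.fun_sum fun j _ => (hvvD j).inner ℝ (hvvD j)
    · intro hNle
      have hinner1 : ∀ j, (⟪vv φ x (θt t) j, ∑ i, ccD i j • x i⟫ : ℝ)
          = ∑ i, ccD i j * uu φ x (θt t) i j := by
        intro j
        rw [inner_sum]
        exact Finset.sum_congr rfl fun i _ => by
          rw [real_inner_smul_right, inner_vv_x]
      have hinner2 : ∀ j, (⟪∑ i, ccD i j • x i, vv φ x (θt t) j⟫ : ℝ)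
          = ∑ i, ccD i j * uu φ x (θt t) i j := by
        intro j
        rw [sum_inner]
        exact Finset.sum_congr rfl fun i _ => by
          rw [real_inner_smul_left, inner_x_vv]
      have hN'eq : N' = ∑ j, ∑ i, 2 * (ccD i j * uu φ x (θt t) i j) := by
        rw [hN'def]
        refine Finset.sum_congr rfl fun j _ => ?_
        rw [hinner1 j, hinner2 j, ← Finset.sum_add_distrib]
        exact Finset.sum_congr rfl fun i _ => by ring
      set br : Fin n → Fin m → ℝ := fun i j =>
        q2 φ x (θt t) i j * (2 * q2 φ x (θt t) i j - lam φ x (θt t) i)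
          + 2 * (q1 φ x (θt t) i j * q3 φ x (θt t) i j) with hbrdef
      have hsplit : N' = -2 * (∑ j, ∑ i, br i j * uu φ x (θt t) i j ^ 2) := by
        have e3 : ∀ (i : Fin n) (j : Fin m), 2 * (ccD i j * uu φ x (θt t) i j)
            = -2 * (br i j * uu φ x (θt t) i j ^ 2)
              + (-2 * dL i) * (q1 φ x (θt t) i j * uu φ x (θt t) i j) := by
          intro i j
          simp only [hccD, hbrdef]
          ring
        rw [hN'eq]
        have e4 : ∑ j, ∑ i, 2 * (ccD i j * uu φ x (θt t) i j)
            = (∑ j, ∑ i, (-2 * (br i j * uu φ x (θt t) i j ^ 2)))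
              + ∑ j, ∑ i, (-2 * dL i) * (q1 φ x (θt t) i j * uu φ x (θt t) i j) := by
          rw [← Finset.sum_add_distrib]
          refine Finset.sum_congr rfl fun j _ => ?_
          rw [← Finset.sum_add_distrib]
          exact Finset.sum_congr rfl fun i _ => e3 i j
        have e5 : ∑ j, ∑ i, (-2 * dL i) * (q1 φ x (θt t) i j * uu φ x (θt t) i j)
            = ∑ i, (-2 * dL i) * ∑ j, (q1 φ x (θt t) i j * uu φ x (θt t) i j) := by
          rw [Finset.sum_comm]
          exact Finset.sum_congr rfl fun i _ => (Finset.mul_sum _ _ _).symm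
        rw [e4, e5]
        simp only [hker, mul_zero, Finset.sum_const_zero, add_zero]
        simp only [← Finset.mul_sum]
      -- bounds
      have hq1pos : ∀ i j, (0:ℝ) < q1 φ x (θt t) i j :=
        fun i j => lt_of_lt_of_le hρ1 (hφ' _)
      have hccb : ∀ (i : Fin n) (j : Fin m), |cc φ x (θt t) i j| ≤ β := by
        intro i j
        have h6 : μ * ∑ i', cc φ x (θt t) i' j ^ 2
            ≤ (⟪vv φ x (θt t) j, vv φ x (θt t) j⟫ : ℝ) := by
          calc μ * ∑ i', cc φ x (θt t) i' j ^ 2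
              ≤ ‖∑ i', cc φ x (θt t) i' j • x i'‖ ^ 2 := hcoh _
            _ = ⟪vv φ x (θt t) j, vv φ x (θt t) j⟫ :=
                (real_inner_self_eq_norm_sq _).symm
        have h7 : (⟪vv φ x (θt t) j, vv φ x (θt t) j⟫ : ℝ) ≤ NN φ x (θt t) :=
          Finset.single_le_sum
            (f := fun j => (⟪vv φ x (θt t) j, vv φ x (θt t) j⟫ : ℝ))
            (fun j _ => real_inner_self_nonneg) (Finset.mem_univ j)
        have h8 : cc φ x (θt t) i j ^ 2 ≤ ∑ i', cc φ x (θt t) i' j ^ 2 :=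
          Finset.single_le_sum (f := fun i' => cc φ x (θt t) i' j ^ 2)
            (fun i' _ => sq_nonneg _) (Finset.mem_univ i)
        have h9 : cc φ x (θt t) i j ^ 2 ≤ β ^ 2 := by
          have : μ * cc φ x (θt t) i j ^ 2 ≤ μ * β ^ 2 :=
            le_trans (mul_le_mul_of_nonneg_left h8 hμ.le) (le_trans h6 (le_trans h7 hNle))
          exact le_of_mul_le_mul_left this hμ
        nlinarith [sq_abs (cc φ x (θt t) i j), abs_nonneg (cc φ x (θt t) i j), hβ]
      have hbrb : ∀ (i : Fin n) (j : Fin m), ρ1 * ρ2 ≤ br i j := by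
        intro i j
        have ha : ρ1 ≤ q1 φ x (θt t) i j := hφ' _
        have hapos : 0 < q1 φ x (θt t) i j := hq1pos i j
        have he : ρ2 ≤ q3 φ x (θt t) i j := hφ''' _
        have hn2 : β * |q2 φ x (θt t) i j|
            ≤ q1 φ x (θt t) i j ^ 2 * q3 φ x (θt t) i j := hnormal _
        have hc : |q1 φ x (θt t) i j * (2 * q2 φ x (θt t) i j - lam φ x (θt t) i)| ≤ β :=
          hccb i j
        have h1' : q1 φ x (θt t) i j * |2 * q2 φ x (θt t) i j - lam φ x (θt t) i| ≤ β := by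
          rwa [abs_mul, abs_of_pos hapos] at hc
        have h2' : |q2 φ x (θt t) i j| * |2 * q2 φ x (θt t) i j - lam φ x (θt t) i|
            ≤ q1 φ x (θt t) i j * q3 φ x (θt t) i j := by
          nlinarith [abs_nonneg (q2 φ x (θt t) i j),
            abs_nonneg (2 * q2 φ x (θt t) i j - lam φ x (θt t) i),
            mul_le_mul hn2 h1' (mul_nonneg hapos.le (abs_nonneg _))
              (mul_nonneg (sq_nonneg _) (le_trans hρ2.le he)),
            mul_pos hβ hapos]
        have h3' : -(q1 φ x (θt t) i j * q3 φ x (θt t) i j)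
            ≤ q2 φ x (θt t) i j * (2 * q2 φ x (θt t) i j - lam φ x (θt t) i) := by
          have := neg_abs_le (q2 φ x (θt t) i j * (2 * q2 φ x (θt t) i j - lam φ x (θt t) i))
          rw [abs_mul] at this
          linarith
        have h4' : ρ1 * ρ2 ≤ q1 φ x (θt t) i j * q3 φ x (θt t) i j :=
          mul_le_mul ha he hρ2.le hapos.le
        simp only [hbrdef]
        linarith
      have huvb : ∀ j : Fin m, μ * (⟪vv φ x (θt t) j, vv φ x (θt t) j⟫ : ℝ)
          ≤ ∑ i, uu φ x (θt t) i j ^ 2 := by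
        intro j
        have hSeq : (⟪vv φ x (θt t) j, vv φ x (θt t) j⟫ : ℝ)
            = ∑ i, cc φ x (θt t) i j * uu φ x (θt t) i j := vv_inner_self φ x _ j
        have hS0 : (0:ℝ) ≤ ⟪vv φ x (θt t) j, vv φ x (θt t) j⟫ := real_inner_self_nonneg
        have hCS := Finset.sum_mul_sq_le_sq_mul_sq Finset.univ
          (fun i => cc φ x (θt t) i j) (fun i => uu φ x (θt t) i j)
        have hcohS : μ * ∑ i, cc φ x (θt t) i j ^ 2
            ≤ ⟪vv φ x (θt t) j, vv φ x (θt t) j⟫ := by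
          calc μ * ∑ i, cc φ x (θt t) i j ^ 2
              ≤ ‖∑ i, cc φ x (θt t) i j • x i‖ ^ 2 := hcoh _
            _ = ⟪vv φ x (θt t) j, vv φ x (θt t) j⟫ := (real_inner_self_eq_norm_sq _).symm
        have hsum2 : (0:ℝ) ≤ ∑ i, uu φ x (θt t) i j ^ 2 :=
          Finset.sum_nonneg fun i _ => sq_nonneg _
        rcases hS0.eq_or_lt with hS | hS
        · rw [← hS, mul_zero]; exact hsum2
        · rw [hSeq] at hS hcohS ⊢
          nlinarith [mul_le_mul_of_nonneg_right hcohS hsum2,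
            mul_le_mul_of_nonneg_left hCS hμ.le]
      have hsum_nonneg2 : ∀ j, (0:ℝ) ≤ ∑ i, uu φ x (θt t) i j ^ 2 :=
        fun j => Finset.sum_nonneg fun i _ => sq_nonneg _
      have hX : ρ1 * ρ2 * μ * NN φ x (θt t) ≤ ∑ j, ∑ i, br i j * uu φ x (θt t) i j ^ 2 := by
        have s1 : ∑ j, ∑ i, (ρ1 * ρ2) * uu φ x (θt t) i j ^ 2
            ≤ ∑ j, ∑ i, br i j * uu φ x (θt t) i j ^ 2 :=
          Finset.sum_le_sum fun j _ => Finset.sum_le_sum fun i _ =>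
            mul_le_mul_of_nonneg_right (hbrb i j) (sq_nonneg _)
        have s2 : ρ1 * ρ2 * μ * NN φ x (θt t)
            ≤ ∑ j, ∑ i, (ρ1 * ρ2) * uu φ x (θt t) i j ^ 2 := by
          have s3 : μ * NN φ x (θt t) ≤ ∑ j, ∑ i, uu φ x (θt t) i j ^ 2 := by
            rw [NN, Finset.mul_sum]
            exact Finset.sum_le_sum fun j _ => huvb j
          calc ρ1 * ρ2 * μ * NN φ x (θt t) = ρ1 * ρ2 * (μ * NN φ x (θt t)) := by ring
            _ ≤ ρ1 * ρ2 * ∑ j, ∑ i, uu φ x (θt t) i j ^ 2 :=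
                mul_le_mul_of_nonneg_left s3 (by positivity)
            _ = ∑ j, ∑ i, (ρ1 * ρ2) * uu φ x (θt t) i j ^ 2 := by
                rw [Finset.mul_sum]
                exact Finset.sum_congr rfl fun j _ => Finset.mul_sum _ _ _
        exact le_trans s2 s1
      rw [hsplit]
      calc -2 * (∑ j, ∑ i, br i j * uu φ x (θt t) i j ^ 2)
          ≤ -2 * (ρ1 * ρ2 * μ * NN φ x (θt t)) := by
            have := mul_le_mul_of_nonpos_left hX (by norm_num : (-2:ℝ) ≤ 0)
            linarith
        _ = -(2 * (ρ1 * ρ2 * μ)) * NN φ x (θt t) := by ring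

end Traj


section ODE

lemma ode_decay (G N : ℝ → ℝ) (c M : ℝ) (hc : 0 < c) (hM : 0 < M)
    (hGpos : ∀ t, 0 ≤ t → 0 < G t)
    (hNnn : ∀ t, 0 ≤ t → 0 ≤ N t)
    (hG' : ∀ t, 0 ≤ t → HasDerivAt G (-(N t)) t)
    (hN' : ∀ t, 0 ≤ t → ∃ N', HasDerivAt N N' t ∧ (N t ≤ M → N' ≤ -(2 * c) * N t))
    (ε2 : ℝ) (hε2 : 0 < ε2) (t : ℝ)
    (hT : G 0 / M + Real.log (max (M / ε2) 1) / c ≤ t) :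
    N t ≤ ε2 := by
  have hcont : ∀ s, 0 ≤ s → ContinuousAt N s := fun s hs =>
    ((hN' s hs).choose_spec.1).continuousAt
  have hlin : ∀ s : ℝ, HasDerivAt (fun y : ℝ => M * y) M s := fun s => by
    simpa using (hasDerivAt_id s).const_mul M
  set T1 : ℝ := G 0 / M with hT1def
  have hT1pos : 0 < T1 := div_pos (hGpos 0 le_rfl) hM
  -- Step 1 : some time T0 ∈ [0, T1] with N T0 ≤ M
  obtain ⟨T0, hT0nn, hT0le, hNT0⟩ : ∃ T0, 0 ≤ T0 ∧ T0 ≤ T1 ∧ N T0 ≤ M := by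
    by_contra hcon
    push_neg at hcon
    have hbig : ∀ s, 0 ≤ s → s ≤ T1 → M < N s := fun s h1 h2 => hcon s h1 h2
    have hanti : AntitoneOn (fun s => G s + M * s) (Set.Icc 0 T1) := by
      apply antitoneOn_of_deriv_nonpos (convex_Icc 0 T1)
      · intro s hs
        exact (((hG' s hs.1).add (hlin s)).continuousAt).continuousWithinAt
      · intro s hs
        rw [interior_Icc] at hs
        exact (((hG' s hs.1.le).add (hlin s)).differentiableAt).differentiableWithinAt
      · intro s hs
        rw [interior_Icc] at hs
        have hD := (hG' s hs.1.le).fun_add (hlin s)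
        rw [hD.deriv]
        have := hbig s hs.1.le hs.2.le
        linarith
    have h01 : (0:ℝ) ∈ Set.Icc 0 T1 := ⟨le_rfl, hT1pos.le⟩
    have hT11 : T1 ∈ Set.Icc 0 T1 := ⟨hT1pos.le, le_rfl⟩
    have := hanti h01 hT11 hT1pos.le
    simp only [mul_zero, add_zero] at this
    have hMT1 : M * T1 = G 0 := by
      rw [hT1def, mul_div_cancel₀ _ hM.ne']
    have : G T1 ≤ 0 := by linarith
    exact absurd this (not_le.mpr (hGpos T1 hT1pos.le))
  -- Step 2 : invariance
  have hinv : ∀ s, T0 ≤ s → N s ≤ M := by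
    intro t2 ht2
    by_contra hgt
    push_neg at hgt
    set A : Set ℝ := Set.Icc T0 t2 ∩ N ⁻¹' Set.Iic M with hAdef
    have hAne : A.Nonempty := ⟨T0, ⟨le_rfl, ht2⟩, hNT0⟩
    have hAbdd : BddAbove A := ⟨t2, fun r hr => hr.1.2⟩
    have hAclosed : IsClosed A := by
      have hcN : ContinuousOn N (Set.Icc T0 t2) := fun r hr =>
        (hcont r (le_trans hT0nn hr.1)).continuousWithinAt
      exact hcN.preimage_isClosed_of_isClosed isClosed_Icc isClosed_Iic
    set s0 : ℝ := sSup A with hs0def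
    have hs0A : s0 ∈ A := hAclosed.csSup_mem hAne hAbdd
    have hs0nn : 0 ≤ s0 := le_trans hT0nn hs0A.1.1
    have hs0lt : s0 < t2 := by
      rcases lt_or_eq_of_le hs0A.1.2 with h | h
      · exact h
      · exfalso; have := hs0A.2; rw [h] at this; exact absurd this (not_le.mpr hgt)
    have hbad : ∀ r, s0 < r → r ≤ t2 → M < N r := by
      intro r hr1 hr2
      by_contra hle
      push_neg at hle
      have hrA : r ∈ A := ⟨⟨le_trans hs0A.1.1 hr1.le, hr2⟩, hle⟩
      exact absurd (le_csSup hAbdd hrA) (not_le.mpr hr1)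
    have hIoo : Set.Ioo s0 t2 ∈ 𝓝[>] s0 := Ioo_mem_nhdsGT hs0lt
    have hs0le2 : N s0 ≤ M := hs0A.2
    rcases lt_or_eq_of_le hs0le2 with hlt | heq
    · have hev : ∀ᶠ r in 𝓝 s0, N r < M :=
        (hcont s0 hs0nn).eventually_lt_const hlt
      have hev' : ∀ᶠ r in 𝓝[>] s0, N r < M := hev.filter_mono nhdsWithin_le_nhds
      obtain ⟨r, hr1, hr2⟩ := (hev'.and (Filter.eventually_of_mem hIoo fun r hr => hr)).exists
      exact absurd hr1 (not_lt.mpr (hbad r hr2.1 hr2.2.le).le)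
    · obtain ⟨N'v, hND, hNineq⟩ := hN' s0 hs0nn
      have hN'neg : N'v < 0 := by
        have h := hNineq hs0le2
        rw [heq] at h
        nlinarith
      have hslope := hasDerivAt_iff_tendsto_slope.mp hND
      have hev : ∀ᶠ r in 𝓝[≠] s0, slope N s0 r < 0 :=
        hslope.eventually_lt_const hN'neg
      have hsub : Set.Ioi s0 ⊆ {r | r ≠ s0} := fun r hr => ne_of_gt hr
      have hev' : ∀ᶠ r in 𝓝[>] s0, slope N s0 r < 0 :=
        hev.filter_mono (nhdsWithin_mono s0 hsub)
      obtain ⟨r, hr1, hr2⟩ := (hev'.and (Filter.eventually_of_mem hIoo fun r hr => hr)).exists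
      have hrpos : 0 < r - s0 := sub_pos.mpr hr2.1
      rw [slope_def_field] at hr1
      have hNr : N r < N s0 := by
        rcases div_neg_iff.mp hr1 with ⟨h1, h2⟩ | ⟨h1, h2⟩
        · linarith
        · linarith
      have := hbad r hr2.1 hr2.2.le
      rw [← heq] at hgt
      linarith [hbad r hr2.1 hr2.2.le, heq ▸ hNr]
  -- Step 3 : exponential decay after T0
  have hdecay : ∀ s, T0 ≤ s → N s ≤ M * Real.exp (-(2 * c) * (s - T0)) := by
    intro s hs
    have hanti : AntitoneOn (fun r => N r * Real.exp (2 * c * r)) (Set.Icc T0 s) := by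
      have hexp : ∀ r : ℝ, HasDerivAt (fun q => Real.exp (2 * c * q))
          (Real.exp (2 * c * r) * (2 * c)) r := by
        intro r
        have := (Real.hasDerivAt_exp (2 * c * r)).comp r ((hasDerivAt_id r).const_mul (2 * c))
        simpa [Function.comp_def] using this
      apply antitoneOn_of_deriv_nonpos (convex_Icc T0 s)
      · intro r hr
        have h0r : 0 ≤ r := le_trans hT0nn hr.1
        obtain ⟨Nv, hND, _⟩ := hN' r h0r
        exact ((hND.mul (hexp r)).continuousAt).continuousWithinAt
      · intro r hr
        rw [interior_Icc] at hr
        have h0r : 0 ≤ r := le_trans hT0nn hr.1.le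
        obtain ⟨Nv, hND, _⟩ := hN' r h0r
        exact ((hND.mul (hexp r)).differentiableAt).differentiableWithinAt
      · intro r hr
        rw [interior_Icc] at hr
        have h0r : 0 ≤ r := le_trans hT0nn hr.1.le
        obtain ⟨Nv, hND, hNineq⟩ := hN' r h0r
        have hD := hND.fun_mul (hexp r)
        rw [hD.deriv]
        have hNrM : N r ≤ M := hinv r hr.1.le
        have h1 := hNineq hNrM
        have h2 : 0 < Real.exp (2 * c * r) := Real.exp_pos _
        nlinarith [hNnn r h0r]
    have hTmem : T0 ∈ Set.Icc T0 s := ⟨le_rfl, hs⟩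
    have hsmem : s ∈ Set.Icc T0 s := ⟨hs, le_rfl⟩
    have h := hanti hTmem hsmem hs
    have hNT0' : N T0 * Real.exp (2 * c * T0) ≤ M * Real.exp (2 * c * T0) :=
      mul_le_mul_of_nonneg_right hNT0 (Real.exp_pos _).le
    have h2 : N s * Real.exp (2 * c * s) ≤ M * Real.exp (2 * c * T0) := le_trans h hNT0'
    calc N s = (N s * Real.exp (2 * c * s)) * Real.exp (-(2 * c * s)) := by
          rw [mul_assoc, ← Real.exp_add, add_neg_cancel, Real.exp_zero, mul_one]
      _ ≤ (M * Real.exp (2 * c * T0)) * Real.exp (-(2 * c * s)) :=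
          mul_le_mul_of_nonneg_right h2 (Real.exp_pos _).le
      _ = M * Real.exp (-(2 * c) * (s - T0)) := by
          rw [mul_assoc, ← Real.exp_add]
          ring_nf
  -- Step 4 : conclusion
  set L : ℝ := Real.log (max (M / ε2) 1) with hLdef
  have hL0 : 0 ≤ L := Real.log_nonneg (le_max_right _ _)
  have hts : T0 + L / c ≤ t := by
    have : T1 + L / c ≤ t := by rw [hT1def]; exact hT
    linarith
  have htT0 : T0 ≤ t := by
    have : 0 ≤ L / c := div_nonneg hL0 hc.le
    linarith
  have hdec := hdecay t htT0
  have hexp_le : Real.exp (-(2 * c) * (t - T0)) ≤ Real.exp (-(2 * L)) := by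
    apply Real.exp_le_exp.mpr
    have h1 : L / c ≤ t - T0 := by linarith
    have h2 : L ≤ c * (t - T0) := by
      rw [div_le_iff₀ hc] at h1
      linarith
    nlinarith
  have hMx : Real.exp L = max (M / ε2) 1 := by
    rw [hLdef, Real.exp_log]
    exact lt_of_lt_of_le zero_lt_one (le_max_right _ _)
  have hfinal : M * Real.exp (-(2 * L)) ≤ ε2 := by
    have hexp2 : Real.exp (-(2 * L)) = 1 / (Real.exp L * Real.exp L) := by
      rw [← Real.exp_add, one_div, ← Real.exp_neg]
      congr 1
      ring
    rcases le_or_gt (M / ε2) 1 with hca | hca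
    · have hMε : M ≤ ε2 := by
        rw [div_le_one hε2] at hca
        exact hca
      have : max (M / ε2) 1 = 1 := max_eq_right hca
      rw [hexp2, hMx, this]
      simpa using hMε
    · have hεM : ε2 < M := by
        rw [lt_div_iff₀ hε2] at hca
        linarith
      have : max (M / ε2) 1 = M / ε2 := max_eq_left hca.le
      rw [hexp2, hMx, this]
      have h1 : M * (1 / (M / ε2 * (M / ε2))) = ε2 ^ 2 / M := by
        field_simp
      rw [h1, div_le_iff₀ hM]
      nlinarith
  calc N t ≤ M * Real.exp (-(2 * c) * (t - T0)) := hdec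
    _ ≤ M * Real.exp (-(2 * L)) := mul_le_mul_of_nonneg_left hexp_le hM.le
    _ ≤ ε2 := hfinal

end ODE

end S15

set_option synthInstance.maxHeartbeats 1000000 in
set_option maxHeartbeats 4000000 in
/-- the Riemannian gradient flow of G reaches ε-stationarity for all
times t ≥ G(θ(0))/(μβ²) + log(max(μβ²/ε², 1))/(ρ1ρ2μ). -/
theorem stmt_15
    (n m d : ℕ) (hn : 1 ≤ n) (hm : 1 ≤ m) (hd : 1 ≤ d)
    (x : Fin n → EuclideanSpace ℝ (Fin d)) (hx : ∀ i, ‖x i‖ = 1)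
    (μ : ℝ) (hμ : 0 < μ)
    (hcoh : ∀ c : Fin n → ℝ, μ * ∑ i, (c i) ^ 2 ≤ ‖∑ i, c i • x i‖ ^ 2)
    (y : Fin n → ℝ)
    (φ : ℝ → ℝ) (hφ : ContDiff ℝ (⊤ : ℕ∞) φ)
    (ρ1 ρ2 : ℝ) (hρ1 : 0 < ρ1) (hρ2 : 0 < ρ2)
    (hφ' : ∀ z, ρ1 ≤ deriv φ z)
    (hφ''' : ∀ z, ρ2 ≤ deriv (deriv (deriv φ)) z)
    (β : ℝ) (hβ : 0 < β)
    (hnormal : ∀ z, β * |deriv (deriv φ) z| ≤ (deriv φ z) ^ 2 * deriv (deriv (deriv φ)) z)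
    (θt : ℝ → Param m d)
    (hmem : ∀ t, 0 ≤ t → ∀ i, netF φ x i (θt t) = y i)
    (hflow : ∀ t, 0 ≤ t → HasDerivAt θt (-(rgradG φ x (θt t))) t) :
    ∀ ε : ℝ, 0 < ε → ∀ t : ℝ,
      regG φ x (θt 0) / (μ * β ^ 2)
          + Real.log (max (μ * β ^ 2 / ε ^ 2) 1) / (ρ1 * ρ2 * μ) ≤ t →
      ‖rgradG φ x (θt t)‖ ≤ ε := by
  intro ε hε t hT
  haveI : Nonempty (Fin n) := ⟨⟨0, hn⟩⟩
  haveI : Nonempty (Fin m) := ⟨⟨0, hm⟩⟩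
  have hGpos : ∀ s : ℝ, 0 ≤ s → 0 < regG φ x (θt s) := by
    intro s _
    exact Finset.sum_pos (fun i _ => Finset.sum_pos
      (fun j _ => pow_pos (lt_of_lt_of_le hρ1 (hφ' _)) 2) Finset.univ_nonempty)
      Finset.univ_nonempty
  have hNnn : ∀ s : ℝ, (0:ℝ) ≤ s → 0 ≤ S15.NN φ x (θt s) := fun s _ => S15.NN_nonneg φ x _
  have hev := S15.evolution hφ hm hμ hρ1 hρ2 hβ hφ' hφ''' hnormal hcoh hflow
  have hode := S15.ode_decay (fun s => regG φ x (θt s)) (fun s => S15.NN φ x (θt s))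
      (ρ1 * ρ2 * μ) (μ * β ^ 2) (mul_pos (mul_pos hρ1 hρ2) hμ) (mul_pos hμ (pow_pos hβ 2))
      hGpos hNnn (fun s hs => (hev s hs).1) (fun s hs => (hev s hs).2)
      (ε ^ 2) (pow_pos hε 2) t hT
  have hdet : (S15.Km φ x (θt t)).det ≠ 0 :=
    (S15.km_posdef φ x hm hμ hρ1 hφ' hcoh _).det_pos.ne'
  have hNt := S15.NN_eq_norm_sq φ x (θt t) hdet
  have hode2 : S15.NN φ x (θt t) ≤ ε ^ 2 := hode
  rw [hNt] at hode2
  nlinarith [norm_nonneg (rgradG φ x (θt t)), hode2]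
end
end

section
/- Suppose φ is infinitely differentiable with φ'(z) > 0 and φ'''(z) ≥ ρ2 > 0 for all z ∈ ℝ. Let θ : [0, ∞) → ℝ^{md} be a Riemannian gradient-flow trajectory of G on the zero-loss set. Then: (a) t ↦ G(θ(t)) is nonincreasing; (b) φ'(θ_j(t) · x_i)² ≤ G(θ(0)) for all t ≥ 0, i ∈ {1,…,n}, j ∈ {1,…,m}; and (c) there exists R > 0 (depending only on φ and G(θ(0))) such that |θ_j(t) · x_i| ≤ R for all t ≥ 0, i, j — i.e., the flow remains in a region where all pre-activations are bounded. -/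
open scoped RealInnerProductSpace
open Real Filter

noncomputable section

section Aux

lemma aux_inner_gradRegG {n m d : ℕ} (φ : ℝ → ℝ) (x : Fin n → EuclideanSpace ℝ (Fin d))
    (θ v : Param m d) :
    ∑ i, ∑ j, (2 * deriv φ ⟪θ j, x i⟫ * deriv (deriv φ) ⟪θ j, x i⟫) * ⟪v j, x i⟫
      = ⟪gradRegG φ x θ, v⟫ := by
  rw [PiLp.inner_apply, Finset.sum_comm]
  refine Finset.sum_congr rfl fun j _ => ?_
  simp only [gradRegG, WithLp.ofLp_toLp, sum_inner, real_inner_smul_left]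
  refine Finset.sum_congr rfl fun i _ => ?_
  rw [real_inner_comm (v j) (x i)]

lemma aux_proj {E : Type*} [NormedAddCommGroup E] [InnerProductSpace ℝ E]
    (K : Submodule ℝ E) [K.HasOrthogonalProjection] (u : E) :
    ⟪u, ((K.orthogonalProjectionOnto u : K) : E)⟫ = ‖((K.orthogonalProjectionOnto u : K) : E)‖ ^ 2 := by
  have h := Submodule.inner_orthogonalProjectionOnto_eq_of_mem_left (K := K) (K.orthogonalProjectionOnto u) u
  rw [Submodule.coe_inner] at h
  rw [real_inner_comm, ← h, real_inner_self_eq_norm_sq]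

lemma aux_strong (φ : ℝ → ℝ) (hφ : ContDiff ℝ (⊤ : ℕ∞) φ) (ρ2 : ℝ)
    (hder3 : ∀ z, ρ2 ≤ deriv (deriv (deriv φ)) z) (z : ℝ) :
    deriv φ 0 + deriv (deriv φ) 0 * z + ρ2 / 2 * z ^ 2 ≤ deriv φ z := by
  have hψ : ContDiff ℝ (⊤ : ℕ∞) (deriv φ) := (contDiff_infty_iff_deriv.mp hφ).2
  have hψ1 : ContDiff ℝ (⊤ : ℕ∞) (deriv (deriv φ)) := (contDiff_infty_iff_deriv.mp hψ).2
  have hH : ∀ w : ℝ, HasDerivAt (fun w => deriv (deriv φ) w - ρ2 * w)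
      (deriv (deriv (deriv φ)) w - ρ2) w := by
    intro w
    have h1 : HasDerivAt (deriv (deriv φ)) (deriv (deriv (deriv φ)) w) w :=
      ((hψ1.differentiable (by simp)) w).hasDerivAt
    have h2 : HasDerivAt (fun w : ℝ => ρ2 * w) ρ2 w := by
      simpa using (hasDerivAt_id w).const_mul ρ2
    exact h1.sub h2
  have hmono : Monotone (fun w => deriv (deriv φ) w - ρ2 * w) :=
    monotone_of_deriv_nonneg (fun w => (hH w).differentiableAt)
      (fun w => by rw [(hH w).deriv]; linarith [hder3 w])
  set k : ℝ → ℝ := fun w => deriv φ w - (deriv φ 0 + deriv (deriv φ) 0 * w + ρ2 / 2 * w ^ 2)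
    with hk
  have hK : ∀ w : ℝ, HasDerivAt k
      (deriv (deriv φ) w - (deriv (deriv φ) 0 + ρ2 * w)) w := by
    intro w
    have h1 : HasDerivAt (deriv φ) (deriv (deriv φ) w) w :=
      ((hψ.differentiable (by simp)) w).hasDerivAt
    have h2 : HasDerivAt (fun w : ℝ => deriv φ 0 + deriv (deriv φ) 0 * w)
        (deriv (deriv φ) 0) w := by
      simpa using ((hasDerivAt_id w).const_mul (deriv (deriv φ) 0)).const_add (deriv φ 0)
    have h3 : HasDerivAt (fun w : ℝ => ρ2 / 2 * w ^ 2) (ρ2 * w) w := by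
      have := (hasDerivAt_pow 2 w).const_mul (ρ2 / 2)
      exact this.congr_deriv (by push_cast; ring)
    exact h1.sub (h2.add h3)
  have hk0 : k 0 = 0 := by simp [hk]
  have hkz : 0 ≤ k z := by
    rcases le_total 0 z with hz | hz
    · have hm : MonotoneOn k (Set.Ici (0 : ℝ)) := by
        refine monotoneOn_of_deriv_nonneg (convex_Ici 0)
          (fun w _ => (hK w).differentiableAt.continuousAt.continuousWithinAt)
          (fun w _ => (hK w).differentiableAt.differentiableWithinAt) ?_
        intro w hw
        rw [interior_Ici] at hw
        rw [(hK w).deriv]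
        have := hmono (le_of_lt hw : (0:ℝ) ≤ w)
        simp only [mul_zero, sub_zero] at this
        linarith
      have h := hm Set.self_mem_Ici (Set.mem_Ici.mpr hz) hz
      rw [hk0] at h
      exact h
    · have hm : AntitoneOn k (Set.Iic (0 : ℝ)) := by
        refine antitoneOn_of_deriv_nonpos (convex_Iic 0)
          (fun w _ => (hK w).differentiableAt.continuousAt.continuousWithinAt)
          (fun w _ => (hK w).differentiableAt.differentiableWithinAt) ?_
        intro w hw
        rw [interior_Iic] at hw
        rw [(hK w).deriv]
        have := hmono (le_of_lt hw : w ≤ (0:ℝ))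
        simp only [mul_zero, sub_zero] at this
        linarith
      have h := hm (Set.mem_Iic.mpr hz) Set.self_mem_Iic hz
      rw [hk0] at h
      exact h
  simp only [hk] at hkz
  linarith

end Aux

set_option maxHeartbeats 1000000 in
set_option synthInstance.maxHeartbeats 1000000 in
/-- along the Riemannian gradient flow, G(θ(t)) is nonincreasing,
φ'(θ_j(t)·x_i)² ≤ G(θ(0)), and all pre-activations remain in a bounded region. -/
theorem stmt_17
    (n m d : ℕ) (hn : 1 ≤ n) (hm : 1 ≤ m) (hd : 1 ≤ d)
    (x : Fin n → EuclideanSpace ℝ (Fin d)) (hx : ∀ i, ‖x i‖ = 1)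
    (y : Fin n → ℝ)
    (φ : ℝ → ℝ) (hφ : ContDiff ℝ (⊤ : ℕ∞) φ)
    (ρ2 : ℝ) (hρ2 : 0 < ρ2)
    (hφ' : ∀ z, 0 < deriv φ z)
    (hφ''' : ∀ z, ρ2 ≤ deriv (deriv (deriv φ)) z)
    (θt : ℝ → Param m d)
    (hmem : ∀ t, 0 ≤ t → ∀ i, netF φ x i (θt t) = y i)
    (hflow : ∀ t, 0 ≤ t → HasDerivAt θt (-(rgradG φ x (θt t))) t) :
    AntitoneOn (fun t => regG φ x (θt t)) (Set.Ici 0) ∧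
    (∀ t, 0 ≤ t → ∀ i j, (deriv φ ⟪θt t j, x i⟫) ^ 2 ≤ regG φ x (θt 0)) ∧
    (∃ R : ℝ, 0 < R ∧ ∀ t, 0 ≤ t → ∀ i j, |⟪θt t j, x i⟫| ≤ R) := by
  classical
  have hψ : ContDiff ℝ (⊤ : ℕ∞) (deriv φ) := (contDiff_infty_iff_deriv.mp hφ).2
  have hψ1 : ContDiff ℝ (⊤ : ℕ∞) (deriv (deriv φ)) := (contDiff_infty_iff_deriv.mp hψ).2
  have hkey : ∀ t : ℝ, 0 ≤ t → HasDerivAt (fun t => regG φ x (θt t))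
      (-‖rgradG φ x (θt t)‖ ^ 2) t := by
    intro t ht
    have hθ := hflow t ht
    have hmain : HasDerivAt (fun t => regG φ x (θt t))
        (∑ i, ∑ j, (2 * deriv φ ⟪θt t j, x i⟫ * deriv (deriv φ) ⟪θt t j, x i⟫) *
          ⟪(-(rgradG φ x (θt t))) j, x i⟫) t := by
      unfold regG
      apply HasDerivAt.fun_sum
      intro i _
      apply HasDerivAt.fun_sum
      intro j _
      have hL : HasDerivAt (fun s => ⟪θt s j, x i⟫) ⟪(-(rgradG φ x (θt t))) j, x i⟫ t := by
        have := ((innerSL ℝ (x i)).comp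
          (PiLp.proj 2 (fun _ : Fin m => EuclideanSpace ℝ (Fin d)) j)).hasFDerivAt.comp_hasDerivAt
          t hθ
        simpa [Function.comp_def, mul_comm, ContinuousLinearMap.coe_comp', innerSL_apply_apply, PiLp.proj_apply, real_inner_comm] using this
      have hout : HasDerivAt (fun z => deriv φ z ^ 2)
          (2 * deriv φ ⟪θt t j, x i⟫ * deriv (deriv φ) ⟪θt t j, x i⟫) ⟪θt t j, x i⟫ := by
        have := (((hψ.differentiable (by simp)) ⟪θt t j, x i⟫).hasDerivAt).pow 2
        exact this.congr_deriv (by push_cast; ring)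
      exact hout.comp t hL
    convert hmain using 1
    rw [aux_inner_gradRegG, inner_neg_right]
    have hp : ⟪gradRegG φ x (θt t), rgradG φ x (θt t)⟫ = ‖rgradG φ x (θt t)‖ ^ 2 := by
      unfold rgradG
      exact aux_proj _ _
    rw [hp]
  have hantit : AntitoneOn (fun t => regG φ x (θt t)) (Set.Ici 0) := by
    refine antitoneOn_of_deriv_nonpos (convex_Ici 0)
      (fun t ht => (hkey t ht).continuousAt.continuousWithinAt) ?_ ?_
    · intro t ht
      rw [interior_Ici] at ht
      exact (hkey t ht.le).differentiableAt.differentiableWithinAt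
    · intro t ht
      rw [interior_Ici] at ht
      rw [(hkey t ht.le).deriv]
      have : (0:ℝ) ≤ ‖rgradG φ x (θt t)‖ ^ 2 := by positivity
      linarith
  have hb : ∀ t, 0 ≤ t → ∀ i j, (deriv φ ⟪θt t j, x i⟫) ^ 2 ≤ regG φ x (θt 0) := by
    intro t ht i j
    have h1 : (deriv φ ⟪θt t j, x i⟫) ^ 2 ≤ regG φ x (θt t) := by
      unfold regG
      calc (deriv φ ⟪θt t j, x i⟫) ^ 2
          ≤ ∑ j, (deriv φ ⟪θt t j, x i⟫) ^ 2 :=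
            Finset.single_le_sum (f := fun j => (deriv φ ⟪θt t j, x i⟫) ^ 2)
              (fun j _ => sq_nonneg _) (Finset.mem_univ j)
        _ ≤ ∑ i, ∑ j, (deriv φ ⟪θt t j, x i⟫) ^ 2 :=
            Finset.single_le_sum
              (f := fun i => ∑ j, (deriv φ ⟪θt t j, x i⟫) ^ 2)
              (fun i _ => Finset.sum_nonneg fun j _ => sq_nonneg _) (Finset.mem_univ i)
    exact h1.trans (hantit Set.self_mem_Ici (Set.mem_Ici.mpr ht) ht)
  refine ⟨hantit, hb, ?_⟩
  set G0 := regG φ x (θt 0) with hG0def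
  have hG0 : 0 ≤ G0 := by
    rw [hG0def]
    unfold regG
    exact Finset.sum_nonneg fun i _ => Finset.sum_nonneg fun j _ => sq_nonneg _
  set C := Real.sqrt G0 with hCdef
  set A := |deriv (deriv φ) 0| with hAdef
  have hC0 : 0 ≤ C := Real.sqrt_nonneg _
  have hA0 : 0 ≤ A := abs_nonneg _
  refine ⟨1 + 2 * (C + A) / ρ2, by positivity, ?_⟩
  intro t ht i j
  set z := ⟪θt t j, x i⟫ with hzdef
  have hzb : (deriv φ z) ^ 2 ≤ G0 := hb t ht i j
  have hCb : deriv φ z ≤ C := by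
    have h1 : |deriv φ z| ≤ C := by
      rw [hCdef, ← Real.sqrt_sq_eq_abs]
      exact Real.sqrt_le_sqrt hzb
    exact (le_abs_self _).trans h1
  have hlow := aux_strong φ hφ ρ2 hφ''' z
  have h00 : 0 < deriv φ 0 := hφ' 0
  have habs : -(deriv (deriv φ) 0 * z) ≤ A * |z| := by
    calc -(deriv (deriv φ) 0 * z) ≤ |deriv (deriv φ) 0 * z| := neg_le_abs _
      _ = A * |z| := abs_mul _ _
  have hq : ρ2 / 2 * z ^ 2 ≤ C + A * |z| := by linarith
  rcases le_or_gt |z| 1 with h1 | h1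
  · have : (0:ℝ) ≤ 2 * (C + A) / ρ2 := by positivity
    linarith
  · have hz2 : z ^ 2 = |z| * |z| := by rw [← sq_abs]; ring
    have key : ρ2 * |z| ≤ 2 * (C + A) := by nlinarith [abs_nonneg z]
    have : |z| ≤ 2 * (C + A) / ρ2 := by
      rw [le_div_iff₀ hρ2]
      linarith
    linarith
end
end
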